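/- arXiv:1210.8401 — 6 statements merged into one kernel-verified Lean document; each statement's English description precedes it below -/
import Mathlib

section
/- Let Ω ⊂ ℝⁿ be a bounded open set, s ∈ (0,1), and let u : ℝⁿ → ℝ be a measurable function with u = 0 a.e. on ℝⁿ \ Ω and u ∈ L²(Ω). If Ω ⊆ B_R (the ball of radius R centered at the origin) and |B_R \ Ω| > 0, then ∫∫_{Q} |u(x)-u(y)|² / |x-y|^{n+2s} dx dy ≥ (|B_R \ Ω| / (2R)^{n+2s}) · ‖u‖²_{L²(Ω)}, where Q = ℝ²ⁿ \ ((ℝⁿ\Ω) × (ℝⁿ\Ω)). -/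
open MeasureTheory ENNReal

/-- Fractional Poincaré-type inequality over the cross-region
`Q = ℝ²ⁿ \ ((ℝⁿ\Ω) × (ℝⁿ\Ω))`. -/
theorem stmt0 (n : ℕ) (s : ℝ) (hs : s ∈ Set.Ioo (0:ℝ) 1)
    (Ω : Set (EuclideanSpace ℝ (Fin n))) (hΩo : IsOpen Ω)
    (hΩb : Bornology.IsBounded Ω)
    (u : EuclideanSpace ℝ (Fin n) → ℝ) (hum : Measurable u)
    (huL2 : MemLp u 2 (volume.restrict Ω))
    (hu0 : ∀ᵐ x : EuclideanSpace ℝ (Fin n), x ∉ Ω → u x = 0)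
    (R : ℝ) (hR : 0 < R) (hΩR : Ω ⊆ Metric.ball 0 R)
    (hpos : 0 < volume (Metric.ball (0 : EuclideanSpace ℝ (Fin n)) R \ Ω)) :
    (volume (Metric.ball (0 : EuclideanSpace ℝ (Fin n)) R \ Ω) /
        ENNReal.ofReal ((2*R) ^ ((n : ℝ) + 2*s))) *
      ∫⁻ x in Ω, ENNReal.ofReal ((u x)^2) ≤
    ∫⁻ p in {p : EuclideanSpace ℝ (Fin n) × EuclideanSpace ℝ (Fin n) |
        p.1 ∈ Ω ∨ p.2 ∈ Ω},
      ENNReal.ofReal ((u p.1 - u p.2)^2 / dist p.1 p.2 ^ ((n : ℝ) + 2*s)) := by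
  obtain ⟨hs0, hs1⟩ := hs
  set A : Set (EuclideanSpace ℝ (Fin n)) := Metric.ball (0 : _) R \ Ω with hA
  set pw : ℝ := (n : ℝ) + 2*s with hpw
  have hpw0 : 0 < pw := by positivity
  have h2R : (0:ℝ) < 2*R := by linarith
  have hCR : (0:ℝ) < (2*R) ^ pw := Real.rpow_pos_of_pos h2R _
  set C : ℝ≥0∞ := ENNReal.ofReal ((2*R) ^ pw) with hC
  have hC0 : C ≠ 0 := by simp [hC, hCR, ne_of_gt]
  have hCt : C ≠ ⊤ := ofReal_ne_top
  have hAm : MeasurableSet A := measurableSet_ball.diff hΩo.measurableSet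
  set f : EuclideanSpace ℝ (Fin n) × EuclideanSpace ℝ (Fin n) → ℝ≥0∞ := fun p =>
    ENNReal.ofReal ((u p.1 - u p.2)^2 / dist p.1 p.2 ^ pw) with hf
  have hfm : Measurable f := by
    apply Measurable.ennreal_ofReal
    apply Measurable.div
    · exact ((hum.comp measurable_fst).sub (hum.comp measurable_snd)).pow_const 2
    · exact ((continuous_fst.dist continuous_snd).rpow_const
        (fun x => Or.inr hpw0.le)).measurable
  set I : ℝ≥0∞ := ∫⁻ x in Ω, ENNReal.ofReal ((u x)^2) with hI
  have hsub : (A ×ˢ Ω) ⊆ {p : EuclideanSpace ℝ (Fin n) × EuclideanSpace ℝ (Fin n) |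
      p.1 ∈ Ω ∨ p.2 ∈ Ω} := fun p hp => Or.inr hp.2
  have key : ∫⁻ p in A ×ˢ Ω, f p ≤
      ∫⁻ p in {p : EuclideanSpace ℝ (Fin n) × EuclideanSpace ℝ (Fin n) |
        p.1 ∈ Ω ∨ p.2 ∈ Ω}, f p := lintegral_mono_set hsub
  have hprod : (volume : Measure (EuclideanSpace ℝ (Fin n) × EuclideanSpace ℝ (Fin n))).restrict
        (A ×ˢ Ω) = (volume.restrict A).prod (volume.restrict Ω) := by
    rw [Measure.volume_eq_prod, Measure.prod_restrict]
  -- inner integral over Ω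
  have inner : ∀ x : EuclideanSpace ℝ (Fin n), x ∈ A → u x = 0 →
      I / C ≤ ∫⁻ y in Ω, f (x, y) := by
    intro x hxA hx0
    have h1 : I / C = ∫⁻ y in Ω, ENNReal.ofReal ((u y)^2) / C := by
      rw [div_eq_mul_inv, ← lintegral_mul_const' C⁻¹ _ (by simp [hC0])]
      simp [div_eq_mul_inv]
    rw [h1]
    refine lintegral_mono_ae ?_
    filter_upwards [ae_restrict_mem hΩo.measurableSet] with y hyΩ
    have hxy : x ≠ y := fun h => hxA.2 (h ▸ hyΩ)
    have hd0 : 0 < dist x y := dist_pos.mpr hxy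
    have hd2R : dist x y < 2*R := by
      have h1 : dist x 0 < R := mem_ball_iff_norm.mp hxA.1 |>.trans_eq (by simp) |>.trans_le le_rfl
      have h2 : dist y 0 < R := Metric.mem_ball.mp (hΩR hyΩ)
      calc dist x y ≤ dist x 0 + dist 0 y := dist_triangle _ _ _
        _ = dist x 0 + dist y 0 := by rw [dist_comm y 0]
        _ < 2*R := by linarith [Metric.mem_ball.mp hxA.1]
    have hfxy : f (x, y) = ENNReal.ofReal ((u y)^2 / dist x y ^ pw) := by
      simp [hf, hx0]
    rw [hfxy, ← ENNReal.ofReal_div_of_pos hCR]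
    apply ENNReal.ofReal_le_ofReal
    exact div_le_div_of_nonneg_left (sq_nonneg _) (Real.rpow_pos_of_pos hd0 _)
      (Real.rpow_le_rpow dist_nonneg hd2R.le hpw0.le)
  have main : (volume A / C) * I ≤ ∫⁻ p in A ×ˢ Ω, f p := by
    rw [hprod, lintegral_prod _ hfm.aemeasurable]
    have step : volume A * (I / C) ≤ ∫⁻ x in A, ∫⁻ y in Ω, f (x, y) := by
      have hconst : ∫⁻ _ in A, (I / C) = (I / C) * volume A := setLIntegral_const A _
      rw [mul_comm, ← hconst]
      refine lintegral_mono_ae ?_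
      filter_upwards [ae_restrict_mem hAm, ae_restrict_of_ae hu0] with x hxA hx0
      exact inner x hxA (hx0 hxA.2)
    refine le_trans (le_of_eq ?_) step
    rw [div_eq_mul_inv, div_eq_mul_inv]; ring
  calc (volume A / C) * I ≤ ∫⁻ p in A ×ˢ Ω, f p := main
    _ ≤ _ := key
end

section
/- Let H be a real Hilbert space, (e_j)_{j≥1} an orthonormal-type basis of eigenvectors with eigenvalues 0 < λ_1 < λ_2 ≤ λ_3 ≤ …, and suppose for the associated quadratic forms one has ‖u‖²_H ≤ λ_k ‖u‖²_{L²} for all u ∈ span(e_1,…,e_k) and ‖u‖²_H ≥ λ_{k+1} ‖u‖²_{L²} for all u in the orthogonal complement P_{k+1} of span(e_1,…,e_k). Let m : Ω → ℝ be measurable with λ_k < m(x) < λ_{k+1} a.e. If u_0 ∈ H satisfies ⟨u_0, φ⟩_H = ∫_Ω m(x) u_0(x) φ(x) dx for all φ ∈ H, then u_0 = 0. -/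
open MeasureTheory ENNReal
open scoped RealInnerProductSpace

section helpers
variable {α : Type*} [MeasurableSpace α] {μ : Measure α}

lemma l2mul (f g : Lp ℝ 2 μ) :
    Integrable (fun x => (f : α → ℝ) x * (g : α → ℝ) x) μ := by
  have := MeasureTheory.L2.integrable_inner (𝕜 := ℝ) f g
  simpa [RCLike.inner_apply, mul_comm] using this

lemma l2norm (f : Lp ℝ 2 μ) :
    ∫ x, (f : α → ℝ) x * (f : α → ℝ) x ∂μ = ‖f‖ ^ 2 := by
  have h1 := MeasureTheory.L2.inner_def (𝕜 := ℝ) f f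
  have h2 : ⟪f, f⟫ = ‖f‖ ^ 2 := real_inner_self_eq_norm_sq f
  rw [h2] at h1
  simpa [RCLike.inner_apply, sq] using h1.symm

end helpers

/-- Non-resonance lemma: if `m` lies strictly between consecutive eigenvalues
`λ_k < m(x) < λ_{k+1}` a.e., then the only `u₀` satisfying
`⟪u₀, φ⟫ = ∫ m u₀ φ` for all `φ` is `u₀ = 0`.  Here `Z` is an abstract real
Hilbert space realized inside `L²(μ)` via the (injective) embedding `T`,
`H_k = span(e_1, …, e_k)` and `P_{k+1} = H_kᗮ`. -/
theorem stmt2 {α : Type*} [MeasurableSpace α] (μ : Measure α)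
    {Z : Type*} [NormedAddCommGroup Z] [InnerProductSpace ℝ Z] [CompleteSpace Z]
    (T : Z →L[ℝ] Lp ℝ 2 μ) (hTinj : Function.Injective T)
    (e : ℕ → Z) (lam : ℕ → ℝ) (k : ℕ) (hk : 1 ≤ k)
    (hlampos : 0 < lam 1)
    (hmono : ∀ i j, 1 ≤ i → i ≤ j → lam i ≤ lam j)
    (hlt : lam k < lam (k+1))
    (hHk : ∀ u ∈ Submodule.span ℝ (e '' Set.Icc 1 k), ‖u‖^2 ≤ lam k * ‖T u‖^2)
    (hPk : ∀ u ∈ (Submodule.span ℝ (e '' Set.Icc 1 k))ᗮ,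
      lam (k+1) * ‖T u‖^2 ≤ ‖u‖^2)
    (m : α → ℝ) (hm : Measurable m)
    (hmb : ∀ᵐ x ∂μ, lam k < m x ∧ m x < lam (k+1))
    (u₀ : Z)
    (heq : ∀ φ : Z, ⟪u₀, φ⟫ =
      ∫ x, m x * (T u₀ : α → ℝ) x * (T φ : α → ℝ) x ∂μ) :
    u₀ = 0 := by
  -- positivity of eigenvalues
  have hlamk : 0 < lam k := lt_of_lt_of_le hlampos (hmono 1 k le_rfl hk)
  have hlamk1 : 0 < lam (k+1) := hlamk.trans hlt
  set S := Submodule.span ℝ (e '' Set.Icc 1 k) with hS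
  have hfin : FiniteDimensional ℝ S :=
    FiniteDimensional.span_of_finite ℝ ((Set.finite_Icc 1 k).image e)
  haveI : CompleteSpace S := FiniteDimensional.complete ℝ S
  set u₁ : Z := (S.orthogonalProjectionOnto u₀ : Z) with hu₁
  set u₂ : Z := u₀ - u₁ with hu₂
  have hu₁mem : u₁ ∈ S := (S.orthogonalProjectionOnto u₀).2
  have hu₂mem : u₂ ∈ Sᗮ := by
    have := Submodule.sub_starProjection_mem_orthogonal (K := S) u₀
    rwa [Submodule.starProjection_apply] at this
  have hsum : u₀ = u₁ + u₂ := by rw [hu₂]; abel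
  have hperp : ⟪u₁, u₂⟫ = 0 := (Submodule.mem_orthogonal S u₂).mp hu₂mem u₁ hu₁mem
  set F : Lp ℝ 2 μ := T u₁ with hF
  set G : Lp ℝ 2 μ := T u₂ with hG
  -- a.e. bound on m
  have hmbd : ∀ᵐ x ∂μ, ‖m x‖ ≤ lam (k+1) := by
    filter_upwards [hmb] with x ⟨h1, h2⟩
    rw [Real.norm_eq_abs, abs_le]
    constructor <;> nlinarith
  -- integrability facts
  have hmmul : ∀ f g : Lp ℝ 2 μ,
      Integrable (fun x => m x * ((f : α → ℝ) x * (g : α → ℝ) x)) μ :=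
    fun f g => (l2mul f g).bdd_mul (hm.aestronglyMeasurable) hmbd
  have hcmul : ∀ (c : ℝ) (f g : Lp ℝ 2 μ),
      Integrable (fun x => c * ((f : α → ℝ) x * (g : α → ℝ) x)) μ :=
    fun c f g => (l2mul f g).const_mul c
  -- T u₀ = F + G a.e.
  have hT0 : (T u₀ : α → ℝ) =ᵐ[μ] fun x => (F : α → ℝ) x + (G : α → ℝ) x := by
    have : T u₀ = F + G := by rw [hsum, map_add]
    rw [this]
    exact Lp.coeFn_add F G
  -- compute the two tested identities
  have key : ∀ φ : Z, ⟪u₀, φ⟫ =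
      (∫ x, m x * ((F : α → ℝ) x * (T φ : α → ℝ) x) ∂μ)
      + ∫ x, m x * ((G : α → ℝ) x * (T φ : α → ℝ) x) ∂μ := by
    intro φ
    rw [heq φ, ← integral_add (hmmul F (T φ)) (hmmul G (T φ))]
    apply integral_congr_ae
    filter_upwards [hT0] with x hx
    rw [hx]; ring
  have key1 : ‖u₁‖^2 = (∫ x, m x * ((F : α → ℝ) x * (F : α → ℝ) x) ∂μ)
      + ∫ x, m x * ((G : α → ℝ) x * (F : α → ℝ) x) ∂μ := by
    have := key u₁
    rw [hsum] at this
    rw [inner_add_left, real_inner_self_eq_norm_sq, real_inner_comm, hperp] at this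
    simpa using this
  have key2 : ‖u₂‖^2 = (∫ x, m x * ((F : α → ℝ) x * (G : α → ℝ) x) ∂μ)
      + ∫ x, m x * ((G : α → ℝ) x * (G : α → ℝ) x) ∂μ := by
    have := key u₂
    rw [hsum] at this
    rw [inner_add_left, real_inner_self_eq_norm_sq, hperp] at this
    simpa using this
  have hFGsymm : (∫ x, m x * ((G : α → ℝ) x * (F : α → ℝ) x) ∂μ)
      = ∫ x, m x * ((F : α → ℝ) x * (G : α → ℝ) x) ∂μ := by
    congr 1; funext x; ring
  set IFF := ∫ x, m x * ((F : α → ℝ) x * (F : α → ℝ) x) ∂μ with hIFF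
  set IGG := ∫ x, m x * ((G : α → ℝ) x * (G : α → ℝ) x) ∂μ with hIGG
  set IFG := ∫ x, m x * ((F : α → ℝ) x * (G : α → ℝ) x) ∂μ with hIFG
  -- bounds
  have hGle : IGG ≤ lam (k+1) * ‖G‖^2 := by
    rw [← l2norm G, ← integral_const_mul]
    refine integral_mono_ae (hmmul G G) (hcmul _ G G) ?_
    filter_upwards [hmb] with x ⟨h1, h2⟩
    exact mul_le_mul_of_nonneg_right h2.le (mul_self_nonneg _)
  have hFge : lam k * ‖F‖^2 ≤ IFF := by
    rw [← l2norm F, ← integral_const_mul]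
    refine integral_mono_ae (hcmul _ F F) (hmmul F F) ?_
    filter_upwards [hmb] with x ⟨h1, h2⟩
    exact mul_le_mul_of_nonneg_right h1.le (mul_self_nonneg _)
  have hG2 : lam (k+1) * ‖G‖^2 ≤ ‖u₂‖^2 := hPk u₂ hu₂mem
  have hF2 : ‖u₁‖^2 ≤ lam k * ‖F‖^2 := hHk u₁ hu₁mem
  -- squeeze
  have hIGGeq : IGG = lam (k+1) * ‖G‖^2 := by
    rw [hFGsymm] at key1
    linarith
  have hIFFeq : IFF = lam k * ‖F‖^2 := by
    rw [hFGsymm] at key1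
    linarith
  -- strictness: G = 0 a.e.
  have hGzero : (G : α → ℝ) =ᵐ[μ] 0 := by
    have hint : Integrable
        (fun x => (lam (k+1) - m x) * ((G : α → ℝ) x * (G : α → ℝ) x)) μ := by
      have := (hcmul (lam (k+1)) G G).sub (hmmul G G)
      refine this.congr ?_
      filter_upwards with x; simp [Pi.sub_apply]; ring
    have hnn : 0 ≤ᵐ[μ] fun x => (lam (k+1) - m x) * ((G : α → ℝ) x * (G : α → ℝ) x) := by
      filter_upwards [hmb] with x ⟨h1, h2⟩
      exact mul_nonneg (by linarith) (mul_self_nonneg _)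
    have hzero : (∫ x, (lam (k+1) - m x) * ((G : α → ℝ) x * (G : α → ℝ) x) ∂μ) = 0 := by
      rw [show (fun x => (lam (k+1) - m x) * ((G : α → ℝ) x * (G : α → ℝ) x))
        = fun x => lam (k+1) * ((G : α → ℝ) x * (G : α → ℝ) x)
          - m x * ((G : α → ℝ) x * (G : α → ℝ) x) by funext x; ring]
      rw [integral_sub (hcmul _ G G) (hmmul G G), integral_const_mul, l2norm G]
      rw [← hIGG, hIGGeq]; ring
    have := (integral_eq_zero_iff_of_nonneg_ae hnn hint).mp hzero
    filter_upwards [this, hmb] with x hx ⟨h1, h2⟩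
    have : (lam (k+1) - m x) ≠ 0 := by linarith
    have := mul_eq_zero.mp hx
    rcases this with h | h
    · exact absurd h ‹_›
    · simpa [mul_self_eq_zero] using h
  have hFzero : (F : α → ℝ) =ᵐ[μ] 0 := by
    have hint : Integrable
        (fun x => (m x - lam k) * ((F : α → ℝ) x * (F : α → ℝ) x)) μ := by
      have := (hmmul F F).sub (hcmul (lam k) F F)
      refine this.congr ?_
      filter_upwards with x; simp [Pi.sub_apply]; ring
    have hnn : 0 ≤ᵐ[μ] fun x => (m x - lam k) * ((F : α → ℝ) x * (F : α → ℝ) x) := by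
      filter_upwards [hmb] with x ⟨h1, h2⟩
      exact mul_nonneg (by linarith) (mul_self_nonneg _)
    have hzero : (∫ x, (m x - lam k) * ((F : α → ℝ) x * (F : α → ℝ) x) ∂μ) = 0 := by
      rw [show (fun x => (m x - lam k) * ((F : α → ℝ) x * (F : α → ℝ) x))
        = fun x => m x * ((F : α → ℝ) x * (F : α → ℝ) x)
          - lam k * ((F : α → ℝ) x * (F : α → ℝ) x) by funext x; ring]
      rw [integral_sub (hmmul F F) (hcmul _ F F), integral_const_mul, l2norm F]
      rw [← hIFF, hIFFeq]; ring
    have := (integral_eq_zero_iff_of_nonneg_ae hnn hint).mp hzero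
    filter_upwards [this, hmb] with x hx ⟨h1, h2⟩
    have : (m x - lam k) ≠ 0 := by linarith
    rcases mul_eq_zero.mp hx with h | h
    · exact absurd h ‹_›
    · simpa [mul_self_eq_zero] using h
  have hG0 : G = 0 := (Lp.eq_zero_iff_ae_eq_zero).mpr hGzero
  have hF0 : F = 0 := (Lp.eq_zero_iff_ae_eq_zero).mpr hFzero
  have hu₂0 : u₂ = 0 := hTinj (by rw [← hG, hG0, map_zero])
  have hu₁0 : u₁ = 0 := hTinj (by rw [← hF, hF0, map_zero])
  rw [hsum, hu₁0, hu₂0, add_zero]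
end

section
/- Let Z be a Hilbert space compactly embedded in L²(Ω), with eigenbasis (e_j) of a symmetric bilinear form and eigenvalues 0 < λ_1 < λ_2 ≤ …, satisfying ‖u‖²_Z ≥ λ_1 ‖u‖²_{L²} for all u ∈ Z. Let F : Ω × ℝ → ℝ satisfy |F(x,t)| ≤ a(x)|t| + (b/2)t² with a ∈ L²(Ω), and suppose limsup_{|t|→∞} 2F(x,t)/t² ≤ ᾱ(x) < λ_1 a.e. Then the functional J(u) = (1/2)‖u‖²_Z − ∫_Ω F(x,u(x)) dx satisfies liminf_{‖u‖_Z → ∞} J(u)/‖u‖²_Z > 0; in particular J is coercive on Z. -/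
set_option maxHeartbeats 1000000
set_option synthInstance.maxHeartbeats 400000

open MeasureTheory Filter ENNReal
open scoped RealInnerProductSpace Topology

section Aux

variable {α : Type*} [MeasurableSpace α] {μ : Measure α}

lemma aux_integral_sq (g : Lp ℝ 2 μ) : ∫ x, ((g : α → ℝ) x)^2 ∂μ = ‖g‖^2 := by
  rw [← real_inner_self_eq_norm_sq, L2.inner_def]
  simp [RCLike.inner_apply, conj_trivial, sq]

lemma aux_abs_mul_integrable (f g : Lp ℝ 2 μ) :
    Integrable (fun x => |(f : α → ℝ) x| * |(g : α → ℝ) x|) μ := by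
  have h := L2.integrable_inner (𝕜 := ℝ) (|f|) (|g|)
  simp only [RCLike.inner_apply, conj_trivial] at h
  refine h.congr ?_
  filter_upwards [Lp.coeFn_abs f, Lp.coeFn_abs g] with x hf hg
  rw [hf, hg, mul_comm]

lemma aux_abs_mul_integral_le (f g : Lp ℝ 2 μ) :
    ∫ x, |(f : α → ℝ) x| * |(g : α → ℝ) x| ∂μ ≤ ‖f‖ * ‖g‖ := by
  have h1 : ∫ x, |(f : α → ℝ) x| * |(g : α → ℝ) x| ∂μ = ⟪|f|, |g|⟫ := by
    rw [L2.inner_def]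
    refine integral_congr_ae ?_
    filter_upwards [Lp.coeFn_abs f, Lp.coeFn_abs g] with x hf hg
    simp [RCLike.inner_apply, conj_trivial, hf, hg, mul_comm]
  rw [h1]
  calc ⟪|f|, |g|⟫ ≤ ‖(|f|)‖ * ‖(|g|)‖ := real_inner_le_norm _ _
  _ = ‖f‖ * ‖g‖ := by rw [norm_abs_eq_norm, norm_abs_eq_norm]

lemma aux_F_measurable (F : α → ℝ → ℝ) (hFm : ∀ t : ℝ, Measurable (fun x => F x t))
    (hFc : ∀ x, Continuous (F x)) {g : α → ℝ} (hg : Measurable g) :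
    Measurable (fun x => F x (g x)) := by
  have h : Measurable (Function.uncurry (fun (t : ℝ) (x : α) => F x t)) :=
    measurable_uncurry_of_continuous_of_measurable (fun x => hFc x) hFm
  exact h.comp (hg.prodMk measurable_id)

lemma aux_ae_subseq (g : ℕ → Lp ℝ 2 μ) (w : Lp ℝ 2 μ) (h : Tendsto g atTop (𝓝 w)) :
    ∃ ns : ℕ → ℕ, StrictMono ns ∧
      ∀ᵐ x ∂μ, Tendsto (fun i => (g (ns i) : α → ℝ) x) atTop (𝓝 ((w : α → ℝ) x)) := by
  have hm : TendstoInMeasure μ (fun k => ⇑(g k)) atTop ⇑w := by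
    refine tendstoInMeasure_of_tendsto_eLpNorm (p := 2) (by norm_num)
      (fun n => Lp.aestronglyMeasurable _) (Lp.aestronglyMeasurable _) ?_
    have heq : (fun n => eLpNorm (⇑(g n) - ⇑w) 2 μ) = fun n => ENNReal.ofReal ‖g n - w‖ := by
      funext n
      rw [← eLpNorm_congr_ae (Lp.coeFn_sub (g n) w), Lp.norm_def,
        ENNReal.ofReal_toReal (Lp.eLpNorm_ne_top _)]
    rw [heq]
    have h2 : Tendsto (fun n => ‖g n - w‖) atTop (𝓝 0) :=
      tendsto_iff_norm_sub_tendsto_zero.mp h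
    simpa using (ENNReal.tendsto_ofReal h2)
  exact hm.exists_seq_tendsto_ae

lemma aux_ptwise (b lam1 ax Ax W : ℝ) (hlam1 : 0 < lam1)
    (N : ℕ → ℝ) (hNpos : ∀ k, 0 < N k) (hN : Tendsto N atTop atTop)
    (gk : ℕ → ℝ) (hgk : Tendsto gk atTop (𝓝 W))
    (Fx : ℝ → ℝ) (hgrow : ∀ t, |Fx t| ≤ ax * |t| + b/2 * t^2)
    (hlims : limsup (fun t : ℝ => 2 * Fx t / t^2) (Bornology.cobounded ℝ) ≤ Ax) :
    ENNReal.ofReal ((b + lam1 - max Ax 0) * W^2) ≤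
      liminf (fun k => ENNReal.ofReal (2*ax*|gk k|/N k + (b+lam1)*(gk k)^2
        - 2 * Fx (N k * gk k) / (N k)^2)) atTop := by
  set A' := max Ax 0 with hA'
  set H : ℕ → ℝ := fun k => 2*ax*|gk k|/N k + (b+lam1)*(gk k)^2
        - 2 * Fx (N k * gk k) / (N k)^2 with hH
  by_cases hW : W = 0
  · simp [hW]
  refine ENNReal.le_of_forall_pos_le_add fun ε' hε' hlt => ?_
  have hε : 0 < (ε' : ℝ) := hε'
  set ε : ℝ := (ε' : ℝ) with hεdef
  have hev : ∀ᶠ k in atTop, (b + lam1 - A') * W^2 - ε ≤ H k := by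
    set δ : ℝ := ε / (4 * (W^2 + 1)) with hδdef
    have hδ : 0 < δ := by positivity
    have hδW : δ * (W^2 + 1) = ε/4 := by rw [hδdef]; field_simp
    have hbig : ∀ᶠ t : ℝ in Bornology.cobounded ℝ, 1 ≤ |t| := by
      have := tendsto_norm_cobounded_atTop (E := ℝ)
      simpa using this.eventually_ge_atTop 1
    have hbdd : IsBoundedUnder (· ≤ ·) (Bornology.cobounded ℝ)
        (fun t : ℝ => 2 * Fx t / t^2) := by
      refine ⟨2*|ax| + b, ?_⟩
      rw [eventually_map]
      filter_upwards [hbig] with t ht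
      have ht2 : (1:ℝ) ≤ t^2 := by nlinarith [sq_abs t]
      have h2 : Fx t ≤ |ax| * |t| + b/2*t^2 := by
        have h1 := hgrow t
        have := le_abs_self ax
        nlinarith [le_abs_self (Fx t), abs_nonneg t]
      show 2 * Fx t / t^2 ≤ 2*|ax| + b
      rw [div_le_iff₀ (by positivity)]
      nlinarith [abs_nonneg ax, sq_abs t, abs_nonneg t,
        mul_le_mul_of_nonneg_left ht2 (abs_nonneg ax)]
    have hevc : ∀ᶠ t : ℝ in Bornology.cobounded ℝ, 2 * Fx t / t^2 < Ax + δ :=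
      eventually_lt_of_limsup_lt (lt_of_le_of_lt hlims (lt_add_of_pos_right _ hδ)) hbdd
    have hWpos : 0 < |W| := abs_pos.mpr hW
    have htk : Tendsto (fun k => |N k * gk k|) atTop atTop := by
      have h1 : ∀ᶠ k in atTop, N k * (|W|/2) ≤ |N k * gk k| := by
        filter_upwards [hgk.abs.eventually_const_lt (show |W|/2 < |W| by linarith),
          hN.eventually_ge_atTop 0] with k hk hk2
        rw [abs_mul, abs_of_nonneg hk2]
        exact mul_le_mul_of_nonneg_left hk.le hk2
      refine tendsto_atTop_mono' _ h1 (hN.atTop_mul_const (by positivity))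
    have htc : Tendsto (fun k => N k * gk k) atTop (Bornology.cobounded ℝ) := by
      rw [← tendsto_norm_atTop_iff_cobounded]
      exact htk
    have hev1 := htc.eventually hevc
    have hev2 : ∀ᶠ k in atTop, N k * gk k ≠ 0 := by
      filter_upwards [htk.eventually_ge_atTop 1] with k hk
      intro h0
      rw [h0] at hk; simp at hk; linarith
    have hev3 : ∀ᶠ k in atTop, (A' + δ) * (gk k)^2 < (A' + δ) * W^2 + ε/4 :=
      (tendsto_const_nhds.mul (hgk.pow 2)).eventually_lt_const
        (lt_add_of_pos_right _ (by positivity))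
    have hev4 : ∀ᶠ k in atTop,
        (b+lam1)*W^2 - ε/4 < 2*ax*|gk k|/N k + (b+lam1)*(gk k)^2 := by
      have h1 : Tendsto (fun k => 2*ax*|gk k|/N k + (b+lam1)*(gk k)^2) atTop
          (𝓝 (0 + (b+lam1)*W^2)) := by
        refine Tendsto.add ?_ (tendsto_const_nhds.mul (hgk.pow 2))
        have h2 : Tendsto (fun k => 2*ax*|gk k| * (N k)⁻¹) atTop (𝓝 (2*ax*|W| * 0)) :=
          Tendsto.mul (tendsto_const_nhds.mul hgk.abs) hN.inv_tendsto_atTop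
        simpa [div_eq_mul_inv] using h2
      rw [zero_add] at h1
      exact h1.eventually_const_lt (by linarith)
    filter_upwards [hev1, hev2, hev3, hev4] with k h1 h2 h3 h4
    have hNk := hNpos k
    have hgkne : gk k ≠ 0 := fun h0 => h2 (by rw [h0, mul_zero])
    have hβ : 2 * Fx (N k * gk k) / (N k)^2 =
        (2 * Fx (N k * gk k) / (N k * gk k)^2) * (gk k)^2 := by
      field_simp
    have hβle : 2 * Fx (N k * gk k) / (N k)^2 ≤ (A' + δ) * (gk k)^2 := by
      rw [hβ]
      have h5 := mul_le_mul_of_nonneg_right h1.le (sq_nonneg (gk k))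
      refine h5.trans ?_
      have h6 : Ax + δ ≤ A' + δ := add_le_add (le_max_left Ax 0) le_rfl
      exact mul_le_mul_of_nonneg_right h6 (sq_nonneg (gk k))
    have hδW2 : δ * W^2 ≤ ε/4 := by nlinarith [hδ.le]
    simp only [hH]
    nlinarith
  have h1 : ENNReal.ofReal ((b + lam1 - A') * W^2 - ε) ≤
      liminf (fun k => ENNReal.ofReal (H k)) atTop := by
    refine le_liminf_of_le (by isBoundedDefault) ?_
    filter_upwards [hev] with k hk
    exact ENNReal.ofReal_le_ofReal hk
  calc ENNReal.ofReal ((b + lam1 - A') * W^2)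
      = ENNReal.ofReal (((b + lam1 - A') * W^2 - ε) + ε) := by congr 1; ring
  _ ≤ ENNReal.ofReal ((b + lam1 - A') * W^2 - ε) + ENNReal.ofReal ε :=
      ENNReal.ofReal_add_le
  _ ≤ liminf (fun k => ENNReal.ofReal (H k)) atTop + ε' := by
      gcongr
      simp [hεdef]

end Aux

/-- Coercivity of `J(u) = ½‖u‖²_Z − ∫_Ω F(x,u)` when
`limsup_{|t|→∞} 2F(x,t)/t² ≤ ᾱ(x) < λ₁` a.e.: one has
`liminf_{‖u‖_Z→∞} J(u)/‖u‖²_Z > 0`, and in particular `J` is coercive.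
`Z` is a real Hilbert space compactly embedded in `L²(μ)` via `T`, and
`λ₁` satisfies `‖u‖²_Z ≥ λ₁‖Tu‖²_{L²}`. -/
theorem stmt5 {α : Type*} [MeasurableSpace α] (μ : Measure α)
    {Z : Type*} [NormedAddCommGroup Z] [InnerProductSpace ℝ Z] [CompleteSpace Z]
    (T : Z →L[ℝ] Lp ℝ 2 μ) (hTc : IsCompactOperator (⇑T))
    (hTinj : Function.Injective T)
    (lam1 : ℝ) (hlam1 : 0 < lam1)
    (hZ : ∀ u : Z, lam1 * ‖T u‖^2 ≤ ‖u‖^2)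
    (F : α → ℝ → ℝ) (a : α → ℝ) (b : ℝ) (hb : 0 ≤ b)
    (hFm : ∀ t : ℝ, Measurable (fun x => F x t)) (hFc : ∀ x, Continuous (F x))
    (ha : MemLp a 2 μ)
    (hgrowth : ∀ᵐ x ∂μ, ∀ t : ℝ, |F x t| ≤ a x * |t| + b/2 * t^2)
    (A : α → ℝ) (hAm : Measurable A)
    (hA : ∀ᵐ x ∂μ,
      limsup (fun t : ℝ => 2 * F x t / t^2) (Bornology.cobounded ℝ) ≤ A x ∧
        A x < lam1) :
    (∃ ε > (0:ℝ), ∃ M : ℝ, ∀ u : Z, M ≤ ‖u‖ →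
      ε ≤ ((1/2) * ‖u‖^2 - ∫ x, F x ((T u : α → ℝ) x) ∂μ) / ‖u‖^2) ∧
    (∀ C : ℝ, ∃ M : ℝ, ∀ u : Z, M ≤ ‖u‖ →
      C ≤ (1/2) * ‖u‖^2 - ∫ x, F x ((T u : α → ℝ) x) ∂μ) := by
  classical
  set aL : Lp ℝ 2 μ := ha.toLp a with haL
  set Ca : ℝ := ‖aL‖ with hCa
  have hCa0 : 0 ≤ Ca := norm_nonneg _
  have haeq : ⇑aL =ᵐ[μ] a := ha.coeFn_toLp
  -- general integrability facts
  have habs_int : ∀ g : Lp ℝ 2 μ, Integrable (fun x => |a x| * |(g : α → ℝ) x|) μ := by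
    intro g
    refine (aux_abs_mul_integrable aL g).congr ?_
    filter_upwards [haeq] with x hx
    rw [hx]
  have hag_int : ∀ g : Lp ℝ 2 μ, Integrable (fun x => a x * |(g : α → ℝ) x|) μ := by
    intro g
    refine (habs_int g).mono' (ha.aestronglyMeasurable.mul
      ((Lp.stronglyMeasurable g).measurable.abs.aestronglyMeasurable)) ?_
    filter_upwards with x
    rw [Real.norm_eq_abs, abs_mul, abs_abs]
  have hag_le : ∀ g : Lp ℝ 2 μ, ∫ x, a x * |(g : α → ℝ) x| ∂μ ≤ Ca * ‖g‖ := by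
    intro g
    have h1 : ∫ x, a x * |(g : α → ℝ) x| ∂μ ≤ ∫ x, |a x| * |(g : α → ℝ) x| ∂μ := by
      refine integral_mono_ae (hag_int g) (habs_int g) ?_
      filter_upwards with x
      exact mul_le_mul_of_nonneg_right (le_abs_self _) (abs_nonneg _)
    have h2 : ∫ x, |a x| * |(g : α → ℝ) x| ∂μ
        = ∫ x, |(aL : α → ℝ) x| * |(g : α → ℝ) x| ∂μ := by
      refine integral_congr_ae ?_
      filter_upwards [haeq] with x hx
      rw [hx]
    refine h1.trans ?_
    rw [h2]
    exact aux_abs_mul_integral_le aL g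
  have hF_int : ∀ (g : Lp ℝ 2 μ) (c : ℝ), Integrable (fun x => F x (c * (g : α → ℝ) x)) μ := by
    intro g c
    have hmeas : AEStronglyMeasurable (fun x => F x (c * (g : α → ℝ) x)) μ :=
      (aux_F_measurable F hFm hFc
        (measurable_const.mul (Lp.stronglyMeasurable g).measurable)).aestronglyMeasurable
    have hdom : Integrable
        (fun x => |c| * (|a x| * |(g : α → ℝ) x|) + (b/2*c^2) * ((g : α → ℝ) x)^2) μ :=
      ((habs_int g).const_mul |c|).add (((Lp.memLp g).integrable_sq).const_mul _)
    refine hdom.mono' hmeas ?_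
    filter_upwards [hgrowth] with x hx
    have h1 := hx (c * (g : α → ℝ) x)
    rw [Real.norm_eq_abs]
    refine h1.trans ?_
    rw [abs_mul]
    have h2 : a x * (|c| * |(g : α → ℝ) x|) ≤ |a x| * (|c| * |(g : α → ℝ) x|) :=
      mul_le_mul_of_nonneg_right (le_abs_self _) (by positivity)
    have h3 : b/2 * (c * (g : α → ℝ) x)^2 = (b/2*c^2) * ((g : α → ℝ) x)^2 := by ring
    nlinarith [h2, h3]
  -- main claim
  have key : ∃ ε > (0:ℝ), ∃ M : ℝ, ∀ u : Z, M ≤ ‖u‖ →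
      ε ≤ ((1/2) * ‖u‖^2 - ∫ x, F x ((T u : α → ℝ) x) ∂μ) / ‖u‖^2 := by
    by_contra hcon
    push_neg at hcon
    have hch : ∀ k : ℕ, ∃ u : Z, ((k:ℝ)+1 ≤ ‖u‖) ∧
        ((1/2) * ‖u‖^2 - ∫ x, F x ((T u : α → ℝ) x) ∂μ) / ‖u‖^2 < 1/((k:ℝ)+1) := by
      intro k
      obtain ⟨u, h1, h2⟩ := hcon (1/((k:ℝ)+1)) (by positivity) ((k:ℝ)+1)
      exact ⟨u, h1, h2⟩
    choose u hu1 hu2 using hch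
    have hnpos : ∀ k, 0 < ‖u k‖ := fun k => lt_of_lt_of_le (by positivity) (hu1 k)
    set v : ℕ → Z := fun k => (‖u k‖)⁻¹ • u k with hv
    have hvnorm : ∀ k, ‖v k‖ = 1 := by
      intro k
      rw [hv]
      rw [norm_smul, norm_inv, norm_norm, inv_mul_cancel₀ (hnpos k).ne']
    set f : ℕ → Lp ℝ 2 μ := fun k => T (v k) with hf
    have hfsq : ∀ k, lam1 * ‖f k‖^2 ≤ 1 := by
      intro k
      have := hZ (v k)
      rwa [hvnorm k, one_pow] at this
    have hK : IsCompact (closure (⇑T '' Metric.closedBall 0 1)) :=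
      hTc.isCompact_closure_image_of_bounded (f := (T : Z →ₗ[ℝ] Lp ℝ 2 μ))
        Metric.isBounded_closedBall
    have hmem : ∀ k, f k ∈ closure (⇑T '' Metric.closedBall 0 1) := fun k =>
      subset_closure ⟨v k, by simp [Metric.mem_closedBall, dist_zero_right, hvnorm k], rfl⟩
    obtain ⟨w, -, φ, hφ, hφt⟩ := hK.tendsto_subseq hmem
    obtain ⟨ψ, hψ, hae⟩ := aux_ae_subseq (f ∘ φ) w hφt
    set ρ : ℕ → ℕ := φ ∘ ψ with hρdef
    have hρ : StrictMono ρ := hφ.comp hψ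
    set g : ℕ → Lp ℝ 2 μ := fun k => f (ρ k) with hg
    have hgLp : Tendsto g atTop (𝓝 w) := hφt.comp hψ.tendsto_atTop
    have hgnorm : Tendsto (fun k => ‖g k‖) atTop (𝓝 ‖w‖) := hgLp.norm
    set N : ℕ → ℝ := fun k => ‖u (ρ k)‖ with hN
    have hNpos : ∀ k, 0 < N k := fun k => hnpos (ρ k)
    have hNk : ∀ k : ℕ, (k:ℝ)+1 ≤ N k := by
      intro k
      refine le_trans ?_ (hu1 (ρ k))
      have hkk : k ≤ ρ k := hρ.le_apply
      linarith [(Nat.cast_le (α := ℝ)).mpr hkk]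
    have hNtop : Tendsto N atTop atTop := by
      refine tendsto_atTop_mono hNk ?_
      exact tendsto_atTop_add_const_right _ 1 tendsto_natCast_atTop_atTop
    have hNinv : Tendsto (fun k => (N k)⁻¹) atTop (𝓝 0) := hNtop.inv_tendsto_atTop
    have hTu : ∀ k, T (u (ρ k)) = N k • g k := by
      intro k
      have h0 : g k = (N k)⁻¹ • T (u (ρ k)) := by
        rw [hg, hf, hv]
        simp only [ContinuousLinearMap.map_smul]
        rfl
      rw [h0, smul_smul, mul_inv_cancel₀ (hNpos k).ne', one_smul]
    -- the integral along the sequence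
    have hint : ∀ k, ∫ x, F x ((T (u (ρ k)) : α → ℝ) x) ∂μ
        = ∫ x, F x (N k * (g k : α → ℝ) x) ∂μ := by
      intro k
      refine integral_congr_ae ?_
      rw [hTu k]
      filter_upwards [Lp.coeFn_smul (N k) (g k)] with x hx
      rw [hx]
      simp [smul_eq_mul]
    set I : ℕ → ℝ := fun k => ∫ x, F x (N k * (g k : α → ℝ) x) ∂μ with hI
    have hIk : ∀ k, (N k)^2 * (1/2 - 1/((k:ℝ)+1)) ≤ I k := by
      intro k
      have h1 := hu2 (ρ k)
      rw [hint k] at h1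
      have h2 : (1:ℝ)/((ρ k:ℝ)+1) ≤ 1/((k:ℝ)+1) := by
        have hkk : k ≤ ρ k := hρ.le_apply
        have hkk2 : ((k:ℝ)+1) ≤ ((ρ k:ℝ)+1) := by
          linarith [(Nat.cast_le (α := ℝ)).mpr hkk]
        exact one_div_le_one_div_of_le (by positivity) hkk2
      have h3 : ((1/2) * (N k)^2 - I k) / (N k)^2 < 1/((k:ℝ)+1) := lt_of_lt_of_le h1 h2
      rw [div_lt_iff₀ (pow_pos (hNpos k) 2)] at h3
      nlinarith [h3]
    -- the nonnegative functions H k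
    set H : ℕ → α → ℝ := fun k x => 2*(a x)*|(g k : α → ℝ) x|/N k
        + (b+lam1)*((g k : α → ℝ) x)^2 - 2 * F x (N k * (g k : α → ℝ) x) / (N k)^2 with hH
    have hH0 : ∀ k, 0 ≤ᵐ[μ] H k := by
      intro k
      filter_upwards [hgrowth] with x hx
      have hNkp := hNpos k
      set G := (g k : α → ℝ) x
      have key2 : 2 * F x (N k * G) ≤ 2*(a x)*(N k*|G|) + b*(N k * G)^2 := by
        have h1 := hx (N k * G)
        have h2 : |N k * G| = N k * |G| := by rw [abs_mul, abs_of_pos hNkp]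
        rw [h2] at h1
        nlinarith [le_abs_self (F x (N k * G))]
      have h3 : 2 * F x (N k * G) / (N k)^2 ≤ 2*(a x)*|G|/N k + b*G^2 := by
        rw [div_le_iff₀ (by positivity)]
        calc 2 * F x (N k * G) ≤ 2*(a x)*(N k*|G|) + b*(N k * G)^2 := key2
        _ = (2*(a x)*|G|/N k + b*G^2) * (N k)^2 := by field_simp
      show (0:ℝ) ≤ 2*(a x)*|G|/N k + (b+lam1)*G^2 - 2 * F x (N k * G) / (N k)^2
      nlinarith [sq_nonneg G, mul_nonneg hlam1.le (sq_nonneg G)]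
    have hHint : ∀ k, Integrable (H k) μ := by
      intro k
      have he : H k = fun x => (2/N k)*(a x*|(g k : α → ℝ) x|)
          + ((b+lam1)*((g k : α → ℝ) x)^2 - (2/(N k)^2) * F x (N k * (g k : α → ℝ) x)) := by
        funext x
        simp only [hH]
        ring
      rw [he]
      have hc23 : Integrable (fun x => (b+lam1)*((g k : α → ℝ) x)^2
          - (2/(N k)^2) * F x (N k * (g k : α → ℝ) x)) μ :=
        (((Lp.memLp (g k)).integrable_sq).const_mul _).sub ((hF_int (g k) (N k)).const_mul _)
      exact ((hag_int (g k)).const_mul _).add hc23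
    have hHval : ∀ k, ∫ x, H k x ∂μ = (2/N k) * (∫ x, a x*|(g k : α → ℝ) x| ∂μ)
        + ((b+lam1) * ‖g k‖^2 - (2/(N k)^2) * I k) := by
      intro k
      have he : H k = fun x => (2/N k)*(a x*|(g k : α → ℝ) x|)
          + ((b+lam1)*((g k : α → ℝ) x)^2 - (2/(N k)^2) * F x (N k * (g k : α → ℝ) x)) := by
        funext x
        simp only [hH]
        ring
      have hc2 : Integrable (fun x => (b+lam1)*((g k : α → ℝ) x)^2) μ :=
        ((Lp.memLp (g k)).integrable_sq).const_mul _
      have hc3 : Integrable (fun x => (2/(N k)^2) * F x (N k * (g k : α → ℝ) x)) μ :=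
        (hF_int (g k) (N k)).const_mul _
      have hc23 : Integrable (fun x => (b+lam1)*((g k : α → ℝ) x)^2
          - (2/(N k)^2) * F x (N k * (g k : α → ℝ) x)) μ := hc2.sub hc3
      rw [he, integral_add ((hag_int (g k)).const_mul _) hc23,
        integral_sub hc2 hc3,
        integral_const_mul, integral_const_mul, integral_const_mul, aux_integral_sq]
    set s : ℕ → ℝ := fun k => 2*Ca*‖g k‖/N k + (b+lam1)*‖g k‖^2 - (1 - 2/((k:ℝ)+1)) with hs
    have hHle : ∀ k, ∫ x, H k x ∂μ ≤ s k := by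
      intro k
      rw [hHval k]
      have h1 : (2/N k) * (∫ x, a x*|(g k : α → ℝ) x| ∂μ) ≤ (2/N k) * (Ca * ‖g k‖) :=
        mul_le_mul_of_nonneg_left (hag_le (g k)) (div_pos two_pos (hNpos k)).le
      have h2 : (2/(N k)^2) * ((N k)^2 * (1/2 - 1/((k:ℝ)+1))) ≤ (2/(N k)^2) * I k :=
        mul_le_mul_of_nonneg_left (hIk k) (by positivity)
      have h3 : (2/(N k)^2) * ((N k)^2 * (1/2 - 1/((k:ℝ)+1))) = 1 - 2/((k:ℝ)+1) := by
        have hne := (hNpos k).ne'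
        field_simp
      have h4 : (2/N k) * (Ca * ‖g k‖) = 2*Ca*‖g k‖/N k := by ring
      simp only [hs]
      nlinarith [h1, h2, h3, h4]
    have hH0' : ∀ k, 0 ≤ ∫ x, H k x ∂μ := fun k => integral_nonneg_of_ae (hH0 k)
    have hsk : Tendsto s atTop (𝓝 ((b+lam1)*‖w‖^2 - 1)) := by
      have t1 : Tendsto (fun k => 2*Ca*‖g k‖/N k) atTop (𝓝 0) := by
        have := ((tendsto_const_nhds (x := 2*Ca)).mul hgnorm).mul hNinv
        simpa [div_eq_mul_inv, mul_zero] using this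
      have t2 : Tendsto (fun k => (b+lam1)*‖g k‖^2) atTop (𝓝 ((b+lam1)*‖w‖^2)) :=
        tendsto_const_nhds.mul (hgnorm.pow 2)
      have h5 : Tendsto (fun k : ℕ => 2/((k:ℝ)+1)) atTop (𝓝 0) := by
        have h6 : Tendsto (fun k : ℕ => 2*(1/((k:ℝ)+1))) atTop (𝓝 (2*0)) :=
          tendsto_const_nhds.mul tendsto_one_div_add_atTop_nhds_zero_nat
        rw [mul_zero] at h6
        refine h6.congr fun k => ?_
        ring
      have t3 : Tendsto (fun k : ℕ => 1 - 2/((k:ℝ)+1)) atTop (𝓝 (1 - 0)) :=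
        tendsto_const_nhds.sub h5
      rw [sub_zero] at t3
      have := (t1.add t2).sub t3
      rw [zero_add] at this
      exact this
    have hS0 : 0 ≤ (b+lam1)*‖w‖^2 - 1 :=
      ge_of_tendsto' hsk (fun k => le_trans (hH0' k) (hHle k))
    -- limit quantities
    set A' : α → ℝ := fun x => max (A x) 0 with hA'
    set P : ℝ := ‖w‖^2 with hP
    have hPval : ∫ x, ((w : α → ℝ) x)^2 ∂μ = P := aux_integral_sq w
    have hwsq : Integrable (fun x => ((w : α → ℝ) x)^2) μ := (Lp.memLp w).integrable_sq
    have hlamP : lam1 * P ≤ 1 := by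
      have h6 : Tendsto (fun k => lam1 * ‖g k‖^2) atTop (𝓝 (lam1 * P)) :=
        tendsto_const_nhds.mul (hgnorm.pow 2)
      exact le_of_tendsto' h6 (fun k => hfsq (ρ k))
    have hwm : Measurable (w : α → ℝ) := (Lp.stronglyMeasurable w).measurable
    have hA'm : Measurable A' := hAm.max measurable_const
    have hQm : Measurable (fun x => A' x * ((w : α → ℝ) x)^2) := hA'm.mul (hwm.pow_const 2)
    have hQint : Integrable (fun x => A' x * ((w : α → ℝ) x)^2) μ := by
      refine (hwsq.const_mul lam1).mono' hQm.aestronglyMeasurable ?_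
      filter_upwards [hA] with x hx
      have h0 : 0 ≤ A' x := le_max_right _ _
      have h1 : A' x ≤ lam1 := (max_lt hx.2 hlam1).le
      rw [Real.norm_eq_abs, abs_mul, abs_of_nonneg h0, abs_of_nonneg (sq_nonneg _)]
      exact mul_le_mul_of_nonneg_right h1 (sq_nonneg _)
    set Q : ℝ := ∫ x, A' x * ((w : α → ℝ) x)^2 ∂μ with hQ
    have hQle : Q ≤ lam1 * P := by
      rw [hQ, ← hPval, ← integral_const_mul]
      refine integral_mono_ae hQint (hwsq.const_mul lam1) ?_
      filter_upwards [hA] with x hx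
      exact mul_le_mul_of_nonneg_right (max_lt hx.2 hlam1).le (sq_nonneg _)
    have hg0m : Measurable (fun x => (b + lam1 - A' x) * ((w : α → ℝ) x)^2) :=
      (measurable_const.sub hA'm).mul (hwm.pow_const 2)
    have hg0int : Integrable (fun x => (b + lam1 - A' x) * ((w : α → ℝ) x)^2) μ := by
      refine (hwsq.const_mul (b+lam1)).mono' hg0m.aestronglyMeasurable ?_
      filter_upwards [hA] with x hx
      have h0 : 0 ≤ A' x := le_max_right _ _
      have h1 : A' x < lam1 := max_lt hx.2 hlam1
      rw [Real.norm_eq_abs, abs_mul, abs_of_nonneg (by linarith), abs_of_nonneg (sq_nonneg _)]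
      exact mul_le_mul_of_nonneg_right (by linarith) (sq_nonneg _)
    have hg00 : 0 ≤ᵐ[μ] fun x => (b + lam1 - A' x) * ((w : α → ℝ) x)^2 := by
      filter_upwards [hA] with x hx
      have h1 : A' x < lam1 := max_lt hx.2 hlam1
      exact mul_nonneg (by linarith) (sq_nonneg _)
    have hg0val : ∫ x, (b + lam1 - A' x) * ((w : α → ℝ) x)^2 ∂μ = (b+lam1) * P - Q := by
      have he : (fun x => (b + lam1 - A' x) * ((w : α → ℝ) x)^2)
          = fun x => (b+lam1) * ((w : α → ℝ) x)^2 - A' x * ((w : α → ℝ) x)^2 := by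
        funext x; ring
      rw [he, integral_sub (hwsq.const_mul _) hQint, integral_const_mul, hPval, hQ]
    have hptw : ∀ᵐ x ∂μ, ENNReal.ofReal ((b + lam1 - A' x) * ((w : α → ℝ) x)^2)
        ≤ liminf (fun k => ENNReal.ofReal (H k x)) atTop := by
      filter_upwards [hae, hgrowth, hA] with x hx1 hx2 hx3
      exact aux_ptwise b lam1 (a x) (A x) ((w : α → ℝ) x) hlam1 N hNpos hNtop
        (fun k => (g k : α → ℝ) x) hx1 (F x) hx2 hx3.1
    have hchain : ENNReal.ofReal ((b+lam1)*P - Q) ≤ ENNReal.ofReal ((b+lam1)*‖w‖^2 - 1) := by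
      calc ENNReal.ofReal ((b+lam1)*P - Q)
          = ∫⁻ x, ENNReal.ofReal ((b + lam1 - A' x) * ((w : α → ℝ) x)^2) ∂μ := by
            rw [← hg0val]
            exact ofReal_integral_eq_lintegral_ofReal hg0int hg00
      _ ≤ ∫⁻ x, liminf (fun k => ENNReal.ofReal (H k x)) atTop ∂μ := lintegral_mono_ae hptw
      _ ≤ liminf (fun k => ∫⁻ x, ENNReal.ofReal (H k x) ∂μ) atTop :=
            lintegral_liminf_le' (fun k =>
              ENNReal.measurable_ofReal.comp_aemeasurable (hHint k).aemeasurable)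
      _ = liminf (fun k => ENNReal.ofReal (∫ x, H k x ∂μ)) atTop := by
            congr 1
            funext k
            exact (ofReal_integral_eq_lintegral_ofReal (hHint k) (hH0 k)).symm
      _ ≤ liminf (fun k => ENNReal.ofReal (s k)) atTop :=
            liminf_le_liminf (Eventually.of_forall fun k => ENNReal.ofReal_le_ofReal (hHle k))
      _ = ENNReal.ofReal ((b+lam1)*‖w‖^2 - 1) := (ENNReal.tendsto_ofReal hsk).liminf_eq
    have hreal : (b+lam1)*P - Q ≤ (b+lam1)*‖w‖^2 - 1 :=
      (ENNReal.ofReal_le_ofReal_iff hS0).mp hchain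
    have hQ1 : 1 ≤ Q := by
      rw [hP] at hreal
      linarith [hreal]
    have hzm : Measurable (fun x => (lam1 - A' x) * ((w : α → ℝ) x)^2) :=
      (measurable_const.sub hA'm).mul (hwm.pow_const 2)
    have hzint : Integrable (fun x => (lam1 - A' x) * ((w : α → ℝ) x)^2) μ := by
      have he : (fun x => (lam1 - A' x) * ((w : α → ℝ) x)^2)
          = fun x => lam1 * ((w : α → ℝ) x)^2 - A' x * ((w : α → ℝ) x)^2 := by
        funext x; ring
      rw [he]
      exact (hwsq.const_mul _).sub hQint
    have hzval : ∫ x, (lam1 - A' x) * ((w : α → ℝ) x)^2 ∂μ = lam1 * P - Q := by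
      have he : (fun x => (lam1 - A' x) * ((w : α → ℝ) x)^2)
          = fun x => lam1 * ((w : α → ℝ) x)^2 - A' x * ((w : α → ℝ) x)^2 := by
        funext x; ring
      rw [he, integral_sub (hwsq.const_mul _) hQint, integral_const_mul, hPval, hQ]
    have hz0 : 0 ≤ᵐ[μ] fun x => (lam1 - A' x) * ((w : α → ℝ) x)^2 := by
      filter_upwards [hA] with x hx
      have h1 : A' x < lam1 := max_lt hx.2 hlam1
      exact mul_nonneg (by linarith) (sq_nonneg _)
    have hQeq : lam1 * P - Q = 0 := by linarith [hQle, hlamP, hQ1]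
    have hzae : (fun x => (lam1 - A' x) * ((w : α → ℝ) x)^2) =ᵐ[μ] 0 :=
      (integral_eq_zero_iff_of_nonneg_ae hz0 hzint).mp (by rw [hzval, hQeq])
    have hwae : (fun x => ((w : α → ℝ) x)^2) =ᵐ[μ] 0 := by
      filter_upwards [hzae, hA] with x hx1 hx2
      have h1 : A' x < lam1 := max_lt hx2.2 hlam1
      simp only [Pi.zero_apply] at hx1 ⊢
      rcases mul_eq_zero.mp hx1 with h | h
      · linarith
      · exact h
    have hPzero : P = 0 := by
      rw [← hPval, integral_congr_ae hwae]
      simp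
    have hfin : lam1 * P = 0 := by rw [hPzero, mul_zero]
    linarith [hQle, hQ1, hfin]
  obtain ⟨ε, hε, M, hM⟩ := key
  refine ⟨⟨ε, hε, M, hM⟩, ?_⟩
  intro C
  refine ⟨max M (max 1 ((|C|+1)/ε)), fun u hu => ?_⟩
  have hM' : M ≤ ‖u‖ := le_trans (le_max_left _ _) hu
  have h1 : (1:ℝ) ≤ ‖u‖ := le_trans (le_trans (le_max_left _ _) (le_max_right M _)) hu
  have h2 : (|C|+1)/ε ≤ ‖u‖ := le_trans (le_trans (le_max_right _ _) (le_max_right M _)) hu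
  have hr := hM u hM'
  have hn2 : 0 < ‖u‖^2 := by positivity
  rw [le_div_iff₀ hn2] at hr
  have h3 : |C|+1 ≤ ‖u‖ * ε := (div_le_iff₀ hε).mp h2
  have h4 : ‖u‖ ≤ ‖u‖^2 := by nlinarith
  have h5 : ‖u‖ * ε ≤ ‖u‖^2 * ε := mul_le_mul_of_nonneg_right h4 hε.le
  nlinarith [le_abs_self C, hr, h3, h5]
end

section
/- Suppose f : Ω × ℝ → ℝ satisfies |f(x,t)| ≤ a(x)+b|t| (a ∈ L²(Ω), b ≥ 0) and there exists k ≥ 1 with λ_k < (f(x,s)−f(x,t))/(s−t) < λ_{k+1} for all s ≠ t and a.e. x ∈ Ω. Then the weak solution u ∈ Z of ⟨u,φ⟩_Z = ∫_Ω f(x,u(x))φ(x) dx for all φ ∈ Z is unique (if it exists). -/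
open MeasureTheory Filter ENNReal
open scoped RealInnerProductSpace

set_option maxHeartbeats 1000000 in
/-- Uniqueness of the weak solution of `⟪u,φ⟫_Z = ∫_Ω f(x,u)φ` when the
difference quotients of `f` lie strictly between consecutive eigenvalues:
`λ_k < (f(x,s)−f(x,t))/(s−t) < λ_{k+1}` for all `s ≠ t` and a.e. `x`. -/
theorem stmt8 {α : Type*} [MeasurableSpace α] (μ : Measure α)
    {Z : Type*} [NormedAddCommGroup Z] [InnerProductSpace ℝ Z] [CompleteSpace Z]
    (T : Z →L[ℝ] Lp ℝ 2 μ) (hTinj : Function.Injective T)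
    (e : ℕ → Z) (lam : ℕ → ℝ) (k : ℕ) (hk : 1 ≤ k)
    (hlampos : 0 < lam k) (hlt : lam k < lam (k+1))
    (hHk : ∀ u ∈ Submodule.span ℝ (e '' Set.Icc 1 k), ‖u‖^2 ≤ lam k * ‖T u‖^2)
    (hPk : ∀ u ∈ (Submodule.span ℝ (e '' Set.Icc 1 k))ᗮ,
      lam (k+1) * ‖T u‖^2 ≤ ‖u‖^2)
    (f : α → ℝ → ℝ) (a : α → ℝ) (b : ℝ) (hb : 0 ≤ b)
    (hfm : ∀ t : ℝ, Measurable (fun x => f x t)) (hfc : ∀ x, Continuous (f x))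
    (ha : MemLp a 2 μ)
    (hgrowth : ∀ᵐ x ∂μ, ∀ t : ℝ, |f x t| ≤ a x + b * |t|)
    (hquot : ∀ᵐ x ∂μ, ∀ s t : ℝ, s ≠ t →
      lam k < (f x s - f x t) / (s - t) ∧
        (f x s - f x t) / (s - t) < lam (k+1)) :
    ∀ u₁ u₂ : Z,
      (∀ φ : Z, ⟪u₁, φ⟫ =
        ∫ x, f x ((T u₁ : α → ℝ) x) * (T φ : α → ℝ) x ∂μ) →
      (∀ φ : Z, ⟪u₂, φ⟫ =
        ∫ x, f x ((T u₂ : α → ℝ) x) * (T φ : α → ℝ) x ∂μ) →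
      u₁ = u₂ := by
  intro u₁ u₂ h₁ h₂
  -- measurability of the Carathéodory function
  have hfmeas : Measurable (Function.uncurry fun t x => f x t) :=
    measurable_uncurry_of_continuous_of_measurable (fun x => hfc x) hfm
  -- MemLp of composition
  have key : ∀ u : Z, MemLp (fun x => f x ((T u : α → ℝ) x)) 2 μ := by
    intro u
    have hg : AEMeasurable (fun x => (T u : α → ℝ) x) μ :=
      (Lp.aestronglyMeasurable (T u)).aemeasurable
    have hmeas : AEStronglyMeasurable (fun x => f x ((T u : α → ℝ) x)) μ :=
      (hfmeas.comp_aemeasurable (hg.prodMk aemeasurable_id)).aestronglyMeasurable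
    have hbound : MemLp (fun x => a x + b * |(T u : α → ℝ) x|) 2 μ := by
      have habs : MemLp (fun x => |(T u : α → ℝ) x|) 2 μ := by
        simpa [Real.norm_eq_abs] using (Lp.memLp (T u)).norm
      exact ha.add (habs.const_mul b)
    refine hbound.of_le hmeas ?_
    filter_upwards [hgrowth] with x hx
    rw [Real.norm_eq_abs, Real.norm_eq_abs]
    exact (hx _).trans (le_abs_self _)
  -- integrability of products against test functions
  have hint : ∀ u φ : Z,
      Integrable (fun x => f x ((T u : α → ℝ) x) * (T φ : α → ℝ) x) μ := by
    intro u φ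
    have h12 : (1 : ℝ≥0∞) / 1 = 1 / 2 + 1 / 2 := by
      rw [ENNReal.div_add_div_same, one_add_one_eq_two,
        ENNReal.div_self two_ne_zero ENNReal.ofNat_ne_top, div_one]
    have := (Lp.memLp (T φ)).smul (r := 1) (key u)
    rw [memLp_one_iff_integrable] at this
    exact this
  set w : Z := u₁ - u₂ with hwdef
  have hw : ∀ φ : Z, ⟪w, φ⟫ =
      ∫ x, (f x ((T u₁ : α → ℝ) x) - f x ((T u₂ : α → ℝ) x)) * (T φ : α → ℝ) x ∂μ := by
    intro φ
    rw [hwdef, inner_sub_left, h₁ φ, h₂ φ, ← integral_sub (hint u₁ φ) (hint u₂ φ)]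
    congr 1
    funext x
    ring
  -- orthogonal decomposition
  have hFD : FiniteDimensional ℝ (Submodule.span ℝ (e '' Set.Icc 1 k)) :=
    FiniteDimensional.span_of_finite ℝ ((Set.finite_Icc 1 k).image e)
  obtain ⟨v, hvH, z, hz, hwvz⟩ : ∃ v ∈ Submodule.span ℝ (e '' Set.Icc 1 k),
      ∃ z ∈ (Submodule.span ℝ (e '' Set.Icc 1 k))ᗮ, w = v + z :=
    ⟨_, (Submodule.orthogonalProjectionOnto _ w).2, _, Submodule.sub_starProjection_mem_orthogonal w,
      (add_sub_cancel _ _).symm⟩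
  have hvz0 : ⟪v, z⟫ = 0 := Submodule.inner_right_of_mem_orthogonal hvH hz
  have hzv0 : ⟪z, v⟫ = 0 := by rw [real_inner_comm]; exact hvz0
  -- left hand side
  have hLHS : ⟪w, z - v⟫ = ‖z‖^2 - ‖v‖^2 := by
    rw [hwvz, inner_add_left, inner_sub_right, inner_sub_right,
      real_inner_self_eq_norm_sq, real_inner_self_eq_norm_sq, hvz0, hzv0]
    ring
  -- L² norms as integrals
  have hnorm : ∀ ψ : Lp ℝ 2 μ, ‖ψ‖^2 = ∫ x, (ψ : α → ℝ) x ^ 2 ∂μ := by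
    intro ψ
    rw [← real_inner_self_eq_norm_sq, L2.inner_def]
    simp [RCLike.inner_apply, conj_trivial, sq]
  -- a.e. facts
  have hWsub : (T w : α → ℝ) =ᵐ[μ] fun x => (T u₁ : α → ℝ) x - (T u₂ : α → ℝ) x := by
    rw [hwdef, map_sub]
    exact Lp.coeFn_sub _ _
  have hWadd : (T w : α → ℝ) =ᵐ[μ] fun x => (T v : α → ℝ) x + (T z : α → ℝ) x := by
    conv_lhs => rw [hwvz]
    rw [map_add]
    exact Lp.coeFn_add _ _
  have hP : (T (z - v) : α → ℝ) =ᵐ[μ] fun x => (T z : α → ℝ) x - (T v : α → ℝ) x := by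
    rw [map_sub]
    exact Lp.coeFn_sub _ _
  -- pointwise structure: the integrand is m ⬝ (Z² − V²)
  have hstruct : ∀ᵐ x ∂μ, ∃ m : ℝ, lam k < m ∧ m < lam (k+1) ∧
      (f x ((T u₁ : α → ℝ) x) - f x ((T u₂ : α → ℝ) x)) * (T (z - v) : α → ℝ) x
        = m * ((T z : α → ℝ) x ^ 2 - (T v : α → ℝ) x ^ 2) := by
    filter_upwards [hquot, hWsub, hWadd, hP] with x hq hsub hadd hp
    by_cases hcase : (T u₁ : α → ℝ) x = (T u₂ : α → ℝ) x
    · refine ⟨(lam k + lam (k+1)) / 2, by linarith, by linarith, ?_⟩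
      have h0 : (T z : α → ℝ) x ^ 2 = (T v : α → ℝ) x ^ 2 := by
        have h00 : (T v : α → ℝ) x + (T z : α → ℝ) x = 0 := by
          rw [← hadd, hsub, hcase]; ring
        have : (T z : α → ℝ) x = -(T v : α → ℝ) x := by linarith
        rw [this]; ring
      rw [hcase, h0]
      ring
    · obtain ⟨hm1, hm2⟩ := hq ((T u₁ : α → ℝ) x) ((T u₂ : α → ℝ) x) hcase
      set m : ℝ := (f x ((T u₁ : α → ℝ) x) - f x ((T u₂ : α → ℝ) x)) /
        ((T u₁ : α → ℝ) x - (T u₂ : α → ℝ) x) with hmdef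
      refine ⟨m, hm1, hm2, ?_⟩
      have hne : (T u₁ : α → ℝ) x - (T u₂ : α → ℝ) x ≠ 0 := sub_ne_zero.mpr hcase
      have hgm : f x ((T u₁ : α → ℝ) x) - f x ((T u₂ : α → ℝ) x)
          = m * ((T u₁ : α → ℝ) x - (T u₂ : α → ℝ) x) := by
        rw [hmdef, div_mul_cancel₀ _ hne]
      have hvz : (T u₁ : α → ℝ) x - (T u₂ : α → ℝ) x
          = (T v : α → ℝ) x + (T z : α → ℝ) x := by rw [← hsub, hadd]
      rw [hgm, hp, hvz]
      ring
  -- integrable functions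
  have hIg : Integrable (fun x =>
      (f x ((T u₁ : α → ℝ) x) - f x ((T u₂ : α → ℝ) x)) * (T (z - v) : α → ℝ) x) μ := by
    have := (hint u₁ (z - v)).sub (hint u₂ (z - v))
    simpa [sub_mul, Pi.sub_def] using this
  have hIR : Integrable (fun x =>
      lam (k+1) * (T z : α → ℝ) x ^ 2 - lam k * (T v : α → ℝ) x ^ 2) μ :=
    ((Lp.memLp (T z)).integrable_sq.const_mul _).sub
      ((Lp.memLp (T v)).integrable_sq.const_mul _)
  -- pointwise inequality
  have hle : (fun x => (f x ((T u₁ : α → ℝ) x) - f x ((T u₂ : α → ℝ) x))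
        * (T (z - v) : α → ℝ) x)
      ≤ᵐ[μ] fun x => lam (k+1) * (T z : α → ℝ) x ^ 2 - lam k * (T v : α → ℝ) x ^ 2 := by
    filter_upwards [hstruct] with x ⟨m, hm1, hm2, hmx⟩
    rw [hmx]
    nlinarith [sq_nonneg ((T z : α → ℝ) x), sq_nonneg ((T v : α → ℝ) x)]
  -- the chain of (in)equalities
  have hA : ⟪w, z - v⟫ = ∫ x,
      (f x ((T u₁ : α → ℝ) x) - f x ((T u₂ : α → ℝ) x)) * (T (z - v) : α → ℝ) x ∂μ :=
    hw (z - v)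
  have hABle : ∫ x, (f x ((T u₁ : α → ℝ) x) - f x ((T u₂ : α → ℝ) x))
        * (T (z - v) : α → ℝ) x ∂μ
      ≤ ∫ x, (lam (k+1) * (T z : α → ℝ) x ^ 2 - lam k * (T v : α → ℝ) x ^ 2) ∂μ :=
    integral_mono_ae hIg hIR hle
  have hB : ∫ x, (lam (k+1) * (T z : α → ℝ) x ^ 2 - lam k * (T v : α → ℝ) x ^ 2) ∂μ
      = lam (k+1) * ‖T z‖^2 - lam k * ‖T v‖^2 := by
    rw [integral_sub (((Lp.memLp (T z)).integrable_sq).const_mul _)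
        (((Lp.memLp (T v)).integrable_sq).const_mul _),
      integral_const_mul, integral_const_mul, ← hnorm, ← hnorm]
  have hBA : lam (k+1) * ‖T z‖^2 - lam k * ‖T v‖^2 ≤ ‖z‖^2 - ‖v‖^2 := by
    have h1 := hPk z hz
    have h2 := hHk v hvH
    linarith
  -- equality throughout
  have heq : ∫ x, (f x ((T u₁ : α → ℝ) x) - f x ((T u₂ : α → ℝ) x))
        * (T (z - v) : α → ℝ) x ∂μ
      = ∫ x, (lam (k+1) * (T z : α → ℝ) x ^ 2 - lam k * (T v : α → ℝ) x ^ 2) ∂μ := by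
    refine le_antisymm hABle ?_
    calc ∫ x, (lam (k+1) * (T z : α → ℝ) x ^ 2 - lam k * (T v : α → ℝ) x ^ 2) ∂μ
        = lam (k+1) * ‖T z‖^2 - lam k * ‖T v‖^2 := hB
      _ ≤ ‖z‖^2 - ‖v‖^2 := hBA
      _ = ⟪w, z - v⟫ := hLHS.symm
      _ = _ := hA
  -- conclude a.e. vanishing
  have hzero : (fun x => (lam (k+1) * (T z : α → ℝ) x ^ 2 - lam k * (T v : α → ℝ) x ^ 2)
      - (f x ((T u₁ : α → ℝ) x) - f x ((T u₂ : α → ℝ) x)) * (T (z - v) : α → ℝ) x)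
      =ᵐ[μ] 0 := by
    rw [← integral_eq_zero_iff_of_nonneg_ae]
    · rw [integral_sub hIR hIg, heq]; ring
    · filter_upwards [hle] with x hx
      simpa using sub_nonneg.mpr hx
    · exact hIR.sub hIg
  have hW0 : (T w : α → ℝ) =ᵐ[μ] 0 := by
    filter_upwards [hzero, hstruct, hWadd] with x h0 ⟨m, hm1, hm2, hmx⟩ hadd
    simp only [Pi.zero_apply] at h0 ⊢
    rw [hmx] at h0
    have hzsq : (T z : α → ℝ) x ^ 2 ≤ 0 := by
      nlinarith [sq_nonneg ((T v : α → ℝ) x)]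
    have hvsq : (T v : α → ℝ) x ^ 2 ≤ 0 := by
      nlinarith [sq_nonneg ((T z : α → ℝ) x)]
    have h1 : (T z : α → ℝ) x = 0 :=
      pow_eq_zero_iff two_ne_zero |>.mp (le_antisymm hzsq (sq_nonneg _))
    have h2 : (T v : α → ℝ) x = 0 :=
      pow_eq_zero_iff two_ne_zero |>.mp (le_antisymm hvsq (sq_nonneg _))
    rw [hadd, h1, h2]
    ring
  have hTw0 : T w = 0 := (Lp.eq_zero_iff_ae_eq_zero).mpr hW0
  have hw0 : w = 0 := hTinj (by rw [hTw0, map_zero])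
  rw [hwdef] at hw0
  exact sub_eq_zero.mp hw0
end

section
/- Let β ∈ L²(Ω) be a weak L²-limit of f(·,u_j)/‖u_j‖_Z where u_j/‖u_j‖_Z → u_0 a.e. in Ω, ‖u_j‖_Z → ∞, and suppose underline-α(x) := liminf_{|t|→∞} f(x,t)/t and ᾱ(x) := limsup_{|t|→∞} f(x,t)/t are finite a.e. Then β(x) = m(x)u_0(x) a.e. for some measurable m with underline-α(x) ≤ m(x) ≤ ᾱ(x) a.e. -/
open MeasureTheory Filter ENNReal

section AuxLemmas

variable {α : Type*} [MeasurableSpace α] {μ : Measure α}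

lemma l2_holder {h : α → ℝ} (hm : AEStronglyMeasurable h μ) {s : Set α} :
    eLpNorm h 1 (μ.restrict s) ≤ eLpNorm h 2 μ * (μ s) ^ (2:ℝ)⁻¹ := by
  have h1 := eLpNorm_le_eLpNorm_mul_rpow_measure_univ (μ := μ.restrict s) (p := 1) (q := 2)
    one_le_two hm.restrict
  have h2 : eLpNorm h 2 (μ.restrict s) ≤ eLpNorm h 2 μ :=
    eLpNorm_mono_measure h Measure.restrict_le_self
  have h3 : (1 / (1:ℝ≥0∞).toReal - 1 / (2:ℝ≥0∞).toReal) = (2:ℝ)⁻¹ := by norm_num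
  rw [Measure.restrict_apply_univ, h3] at h1
  exact h1.trans (mul_le_mul_left h2 _)

lemma l2_integrableOn {B : α → ℝ} (hB : MemLp B 2 μ) {s : Set α} (hs : μ s ≠ ∞) :
    IntegrableOn B s μ := by
  rw [IntegrableOn, ← memLp_one_iff_integrable]
  refine ⟨hB.aestronglyMeasurable.restrict, ?_⟩
  refine lt_of_le_of_lt (l2_holder hB.aestronglyMeasurable) ?_
  exact ENNReal.mul_lt_top hB.2.lt_top (ENNReal.rpow_lt_top_of_nonneg (by norm_num)  hs)

lemma setIntegral_le_l2 {h : α → ℝ} (hm : AEStronglyMeasurable h μ)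
    (hfin : eLpNorm h 2 μ ≠ ∞) {s : Set α} (hs : μ s ≠ ∞) :
    ∫ x in s, h x ∂μ ≤ (eLpNorm h 2 μ * (μ s) ^ (2:ℝ)⁻¹).toReal := by
  have hRfin : eLpNorm h 2 μ * (μ s) ^ (2:ℝ)⁻¹ ≠ ∞ :=
    (ENNReal.mul_lt_top hfin.lt_top (ENNReal.rpow_lt_top_of_nonneg (by norm_num) hs)).ne
  by_cases hint : Integrable h (μ.restrict s)
  · calc ∫ x in s, h x ∂μ ≤ |∫ x in s, h x ∂μ| := le_abs_self _
    _ ≤ ∫ x in s, |h x| ∂μ := by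
        rw [← Real.norm_eq_abs]
        exact (norm_integral_le_integral_norm _).trans (by simp [Real.norm_eq_abs])
    _ = (∫⁻ x, ‖h x‖₊ ∂(μ.restrict s)).toReal := by
        have := integral_norm_eq_lintegral_enorm (hm.restrict (s := s))
        simp only [Real.norm_eq_abs] at this
        exact this
    _ = (eLpNorm h 1 (μ.restrict s)).toReal := (congrArg ENNReal.toReal (eLpNorm_one_eq_lintegral_enorm (f := h) (μ := μ.restrict s))).symm
    _ ≤ (eLpNorm h 2 μ * (μ s) ^ (2:ℝ)⁻¹).toReal :=
        ENNReal.toReal_mono hRfin (l2_holder hm)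
  · rw [integral_undef hint]
    positivity

lemma my_vitali {h : ℕ → α → ℝ} (hm : ∀ j, StronglyMeasurable (h j))
    (hnn : ∀ j x, 0 ≤ h j x) {C : ℝ≥0∞} (hC : C ≠ ∞)
    (hb : ∀ᶠ j in atTop, eLpNorm (h j) 2 μ ≤ C)
    {A : Set α} (hA : MeasurableSet A) (hAfin : μ A ≠ ∞)
    (htend : ∀ᵐ x ∂μ, Tendsto (fun j => h j x) atTop (nhds 0)) :
    Tendsto (fun j => ∫ x in A, h j x ∂μ) atTop (nhds 0) := by
  refine tendsto_order.2 ⟨fun c hc => ?_, fun c hc => ?_⟩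
  · filter_upwards with j
    exact lt_of_lt_of_le hc (integral_nonneg fun x => hnn j x)
  · -- choose δ
    set M : ℝ := (μ A).toReal with hM
    have hM0 : 0 ≤ M := ENNReal.toReal_nonneg
    set c₁ : ℝ := c / (2 * (M + 1)) with hc₁
    have hc₁pos : 0 < c₁ := by positivity
    set δ : ℝ := (c / (4 * (C.toReal + 1))) ^ (2:ℕ) with hδ
    have hδpos : 0 < δ := by positivity
    -- Egorov
    obtain ⟨t, hts, htm, htμ, hunif⟩ :=
      tendstoUniformlyOn_of_ae_tendsto hm stronglyMeasurable_const hA hAfin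
        (by filter_upwards [htend] with x hx _ using hx) hδpos
    have hsmall := (Metric.tendstoUniformlyOn_iff.mp hunif) c₁ hc₁pos
    filter_upwards [hb, hsmall] with j hjC hjuni
    have hmem : MemLp (h j) 2 μ := ⟨(hm j).aestronglyMeasurable, hjC.trans_lt hC.lt_top⟩
    have hInt : IntegrableOn (h j) A μ := l2_integrableOn hmem hAfin
    have htfin : μ t ≠ ∞ := (htμ.trans_lt ENNReal.ofReal_lt_top).ne
    have hsplit := integral_diff htm hInt hts
    -- bound on A \ t
    have hb1 : ∫ x in A \ t, h j x ∂μ ≤ c₁ * M := by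
      have h1 : ∫ x in A \ t, h j x ∂μ ≤ ∫ _x in A \ t, c₁ ∂μ := by
        refine setIntegral_mono_on (hInt.mono_set Set.diff_subset) ?_ (hA.diff htm) ?_
        · exact integrableOn_const ((measure_mono Set.diff_subset).trans_lt
            hAfin.lt_top).ne
        · intro x hx
          have := hjuni x hx
          rw [dist_comm, dist_zero_right, Real.norm_eq_abs] at this
          
          exact (le_abs_self _).trans this.le
      rw [setIntegral_const] at h1
      refine h1.trans ?_
      have : (μ (A \ t)).toReal ≤ M := ENNReal.toReal_mono hAfin (measure_mono Set.diff_subset)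
      calc (μ (A \ t)).toReal • c₁ = c₁ * (μ (A \ t)).toReal := by
            rw [smul_eq_mul, mul_comm]
        _ ≤ c₁ * M := by nlinarith
    -- bound on t
    have hb2 : ∫ x in t, h j x ∂μ ≤ C.toReal * δ ^ (2:ℝ)⁻¹ := by
      refine (setIntegral_le_l2 (hm j).aestronglyMeasurable
        (hjC.trans_lt hC.lt_top).ne htfin).trans ?_
      rw [ENNReal.toReal_mul]
      refine mul_le_mul (ENNReal.toReal_mono hC hjC) ?_ ENNReal.toReal_nonneg
        ENNReal.toReal_nonneg
      have h1 : (μ t) ^ (2:ℝ)⁻¹ ≤ (ENNReal.ofReal δ) ^ (2:ℝ)⁻¹ :=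
        ENNReal.rpow_le_rpow htμ (by norm_num)
      have h2 : ((ENNReal.ofReal δ) ^ (2:ℝ)⁻¹).toReal = δ ^ (2:ℝ)⁻¹ := by
        rw [← ENNReal.toReal_rpow, ENNReal.toReal_ofReal hδpos.le]
      calc ((μ t) ^ (2:ℝ)⁻¹).toReal ≤ ((ENNReal.ofReal δ) ^ (2:ℝ)⁻¹).toReal :=
            ENNReal.toReal_mono (by simp [ENNReal.rpow_eq_top_iff, ENNReal.ofReal_ne_top]) h1
        _ = δ ^ (2:ℝ)⁻¹ := h2
    -- combine
    have hδval : δ ^ (2:ℝ)⁻¹ = c / (4 * (C.toReal + 1)) := by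
      rw [hδ, ← Real.rpow_natCast _ 2, ← Real.rpow_mul (by positivity)]
      norm_num
    have hC0 : 0 ≤ C.toReal := ENNReal.toReal_nonneg
    have hkey2 : C.toReal * δ ^ (2:ℝ)⁻¹ < c / 2 := by
      rw [hδval, mul_div_assoc', div_lt_div_iff₀ (by positivity) (by norm_num : (0:ℝ) < 2)]
      nlinarith
    have hkey1 : c₁ * M ≤ c / 2 := by
      rw [hc₁, div_mul_eq_mul_div, div_le_div_iff₀ (by positivity) (by norm_num : (0:ℝ) < 2)]
      nlinarith
    have : ∫ x in A, h j x ∂μ = (∫ x in A \ t, h j x ∂μ) + ∫ x in t, h j x ∂μ := by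
      rw [hsplit]; ring
    rw [this]
    linarith

lemma weak_le {G : ℕ → α → ℝ} (hGm : ∀ j, StronglyMeasurable (G j)) {C : ℝ≥0∞} (hC : C ≠ ∞)
    (hGb : ∀ᶠ j in atTop, eLpNorm (G j) 2 μ ≤ C)
    {U B : α → ℝ} (hUm : Measurable U) (hU : MemLp U 2 μ)
    (hBm : Measurable B) (hB : MemLp B 2 μ)
    (hpinch : ∀ᵐ x ∂μ, ∀ ε : ℝ, 0 < ε → ∀ᶠ j in atTop, G j x ≤ U x + ε)
    (hconv : ∀ s : Set α, MeasurableSet s → μ s ≠ ∞ →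
      Tendsto (fun j => ∫ x in s, G j x ∂μ) atTop (nhds (∫ x in s, B x ∂μ))) :
    ∀ᵐ x ∂μ, B x ≤ U x := by
  have key : ∀ ε : ℝ, 0 < ε → μ {x | U x + ε < B x} = 0 := by
    intro ε hε
    set s := {x | U x + ε < B x} with hs_def
    have hsm : MeasurableSet s := measurableSet_lt (hUm.add_const ε) hBm
    have hsfin : μ s ≠ ∞ := by
      have hBU : MemLp (fun x => B x - U x) 2 μ := hB.sub hU
      have hch := meas_ge_le_mul_pow_eLpNorm_enorm μ (p := 2) two_ne_zero ENNReal.ofNat_ne_top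
        hBU.aestronglyMeasurable (ε := ENNReal.ofReal ε) (by simp [hε]) (by simp)
      have hsub : s ⊆ {x | ENNReal.ofReal ε ≤ ‖B x - U x‖₊} := by
        intro x hx
        have hx' : U x + ε < B x := hx
        have h1 : ε ≤ B x - U x := by linarith
        have h2 : ε ≤ ‖B x - U x‖ := h1.trans (le_abs_self _)
        show ENNReal.ofReal ε ≤ (‖B x - U x‖₊ : ℝ≥0∞)
        calc ENNReal.ofReal ε ≤ ENNReal.ofReal ‖B x - U x‖ := ENNReal.ofReal_le_ofReal h2
          _ = (‖B x - U x‖₊ : ℝ≥0∞) := ofReal_norm_eq_enorm _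
      refine ((measure_mono hsub).trans hch).trans_lt ?_ |>.ne
      have h1 : eLpNorm (fun x => B x - U x) 2 μ ^ (2:ℝ≥0∞).toReal ≠ ∞ := by
        simp only [ENNReal.toReal_ofNat]
        exact (ENNReal.rpow_lt_top_of_nonneg (by norm_num) hBU.2.ne).ne
      refine ENNReal.mul_lt_top ?_ h1.lt_top
      simp only [ENNReal.toReal_ofNat]
      refine ENNReal.rpow_lt_top_of_nonneg (by norm_num) ?_
      simp [hε, hε.ne']
    -- main comparison
    set h : ℕ → α → ℝ := fun j x => max (G j x - U x) 0 with hh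
    have hhm : ∀ j, StronglyMeasurable (h j) :=
      fun j => (((hGm j).measurable.sub hUm).max measurable_const).stronglyMeasurable
    have hhnn : ∀ j x, 0 ≤ h j x := fun j x => le_max_right _ _
    have hCU : C + eLpNorm U 2 μ ≠ ∞ := by
      simp [hC, hU.2.ne]
    have hhb : ∀ᶠ j in atTop, eLpNorm (h j) 2 μ ≤ C + eLpNorm U 2 μ := by
      filter_upwards [hGb] with j hj
      have h1 : eLpNorm (h j) 2 μ ≤ eLpNorm (fun x => G j x - U x) 2 μ := by
        refine eLpNorm_mono fun x => ?_
        simp only [hh, Real.norm_eq_abs]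
        rw [abs_of_nonneg (le_max_right _ _ : (0:ℝ) ≤ max (G j x - U x) 0)]
        exact max_le (le_abs_self _) (abs_nonneg _)
      refine h1.trans ((eLpNorm_sub_le (hGm j).aestronglyMeasurable
        hU.aestronglyMeasurable one_le_two).trans ?_)
      exact add_le_add_left hj _
    have hhtend : ∀ᵐ x ∂μ, Tendsto (fun j => h j x) atTop (nhds 0) := by
      filter_upwards [hpinch] with x hx
      refine tendsto_order.2 ⟨fun c hc => ?_, fun c hc => ?_⟩
      · filter_upwards with j; exact lt_of_lt_of_le hc (hhnn j x)
      · filter_upwards [hx (c/2) (by linarith)] with j hj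
        have : h j x ≤ c/2 := by
          simp only [hh]
          refine max_le (by linarith) (by linarith)
        linarith
    have hvit := my_vitali hhm hhnn hCU hhb hsm hsfin hhtend
    have hUint : IntegrableOn U s μ := l2_integrableOn hU hsfin
    have hBint : IntegrableOn B s μ := l2_integrableOn hB hsfin
    have hmono : ∀ᶠ j in atTop, ∫ x in s, G j x ∂μ ≤
        (∫ x in s, U x ∂μ) + ∫ x in s, h j x ∂μ := by
      filter_upwards [hGb, hhb] with j hj hj2
      have hGmem : MemLp (G j) 2 μ := ⟨(hGm j).aestronglyMeasurable, hj.trans_lt hC.lt_top⟩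
      have hGint : IntegrableOn (G j) s μ := l2_integrableOn hGmem hsfin
      have hhmem : MemLp (h j) 2 μ :=
        ⟨(hhm j).aestronglyMeasurable, hj2.trans_lt hCU.lt_top⟩
      have hhint : IntegrableOn (h j) s μ := l2_integrableOn hhmem hsfin
      rw [← integral_add hUint hhint]
      refine setIntegral_mono_on hGint (hUint.add hhint) hsm fun x _ => ?_
      have : G j x - U x ≤ h j x := le_max_left _ _
      linarith
    have hlim2 : Tendsto (fun j => (∫ x in s, U x ∂μ) + ∫ x in s, h j x ∂μ) atTop
        (nhds (∫ x in s, U x ∂μ)) := by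
      have := tendsto_const_nhds (x := ∫ x in s, U x ∂μ) (f := atTop (α := ℕ)) |>.add hvit
      simpa using this
    have hle : ∫ x in s, B x ∂μ ≤ ∫ x in s, U x ∂μ :=
      le_of_tendsto_of_tendsto (hconv s hsm hsfin) hlim2 hmono
    have hge : (∫ x in s, U x ∂μ) + ε * (μ s).toReal ≤ ∫ x in s, B x ∂μ := by
      have hconstint : IntegrableOn (fun _ => ε) s μ :=
        integrableOn_const hsfin
      have h1 : ∫ x in s, (U x + ε) ∂μ ≤ ∫ x in s, B x ∂μ := by
        refine setIntegral_mono_on (hUint.add hconstint) hBint hsm fun x hx => ?_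
        exact le_of_lt hx
      rw [integral_add hUint hconstint, setIntegral_const, smul_eq_mul, mul_comm] at h1
      exact h1
    have hμ0 : ε * (μ s).toReal ≤ 0 := by linarith
    have : (μ s).toReal = 0 := by
      have h0 : 0 ≤ (μ s).toReal := ENNReal.toReal_nonneg
      nlinarith
    rcases (ENNReal.toReal_eq_zero_iff _).1 this with h | h
    · exact h
    · exact absurd h hsfin
  have hnull : μ (⋃ n : ℕ, {x | U x + 1/(n+1) < B x}) = 0 :=
    measure_iUnion_null fun n => key _ (by positivity)
  rw [ae_iff]
  refine measure_mono_null ?_ hnull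
  intro x hx
  have hx' : U x < B x := not_le.1 hx
  obtain ⟨n, hn⟩ := exists_nat_one_div_lt (sub_pos.2 hx')
  refine Set.mem_iUnion.2 ⟨n, ?_⟩
  show U x + 1/(n+1) < B x
  push_cast
  push_cast at hn
  linarith

end AuxLemmas

lemma pinch_arith {p q c la ua M ε ε₁ ε₂ : ℝ}
    (hM : 0 ≤ M) (hε₁ : 0 < ε₁) (h₁ : ε₁ * (|c| + 1) ≤ ε / 2) (h₂ : M * ε₂ ≤ ε / 2)
    (hpl : la - ε₁ < p) (hpu : p < ua + ε₁) (hpM : |p| ≤ M) (hq : |q - c| ≤ ε₂) :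
    p * q ≤ (if 0 ≤ c then ua * c else la * c) + ε ∧
    (if 0 ≤ c then la * c else ua * c) - ε ≤ p * q := by
  have hq0 : 0 ≤ ε₂ := le_trans (abs_nonneg _) hq
  have key : |p * q - p * c| ≤ ε / 2 := by
    have h3 : |p * q - p * c| = |p| * |q - c| := by
      rw [← abs_mul]; ring_nf
    rw [h3]
    exact (mul_le_mul hpM hq (abs_nonneg _) hM).trans h₂
  obtain ⟨k1, k2⟩ := abs_le.1 key
  have hcc : ε₁ * |c| ≤ ε / 2 := by nlinarith [hε₁.le]
  by_cases h0 : 0 ≤ c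
  · have hac : |c| = c := abs_of_nonneg h0
    rw [hac] at hcc
    simp only [if_pos h0]
    constructor
    · nlinarith [mul_le_mul_of_nonneg_right hpu.le h0]
    · nlinarith [mul_le_mul_of_nonneg_right hpl.le h0]
  · push_neg at h0
    have hac : |c| = -c := abs_of_neg h0
    rw [hac] at hcc
    simp only [if_neg (not_le.2 h0)]
    constructor
    · nlinarith [mul_le_mul_of_nonpos_right hpl.le h0.le]
    · nlinarith [mul_le_mul_of_nonpos_right hpu.le h0.le]

set_option maxHeartbeats 1000000 in
/-- Identification of the weak limit: if `f(·,u_j)/‖u_j‖_Z ⇀ β` in `L²`,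
`u_j/‖u_j‖_Z → u₀` a.e., `‖u_j‖_Z → ∞`, and the asymptotic slopes
`α̲(x) = liminf_{|t|→∞} f(x,t)/t` and `ᾱ(x) = limsup_{|t|→∞} f(x,t)/t` are
finite a.e., then `β = m·u₀` a.e. for some measurable `m` with
`α̲ ≤ m ≤ ᾱ` a.e. -/
theorem stmt15 {α : Type*} [MeasurableSpace α] (μ : Measure α)
    {Z : Type*} [NormedAddCommGroup Z] [InnerProductSpace ℝ Z] [CompleteSpace Z]
    (T : Z →L[ℝ] Lp ℝ 2 μ)
    (f : α → ℝ → ℝ) (a : α → ℝ) (b : ℝ) (hb : 0 ≤ b)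
    (hfm : ∀ t : ℝ, Measurable (fun x => f x t)) (hfc : ∀ x, Continuous (f x))
    (ha : MemLp a 2 μ)
    (hgrowth : ∀ᵐ x ∂μ, ∀ t : ℝ, |f x t| ≤ a x + b * |t|)
    (u : ℕ → Z) (hnorm : Tendsto (fun j => ‖u j‖) atTop atTop)
    (u₀ : α → ℝ) (hu₀m : Measurable u₀)
    (hae : ∀ᵐ x ∂μ, Tendsto (fun j => (T (u j) : α → ℝ) x / ‖u j‖) atTop
      (nhds (u₀ x)))
    (alow aup : α → ℝ) (halowm : Measurable alow) (haupm : Measurable aup)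
    (halow : ∀ᵐ x ∂μ,
      alow x = liminf (fun t : ℝ => f x t / t) (Bornology.cobounded ℝ))
    (haup : ∀ᵐ x ∂μ,
      aup x = limsup (fun t : ℝ => f x t / t) (Bornology.cobounded ℝ))
    (β : Lp ℝ 2 μ)
    (hweak : ∀ g : Lp ℝ 2 μ,
      Tendsto
        (fun j => ∫ x, (f x ((T (u j) : α → ℝ) x) / ‖u j‖) * (g : α → ℝ) x ∂μ)
        atTop (nhds (∫ x, (β : α → ℝ) x * (g : α → ℝ) x ∂μ))) :
    ∃ m : α → ℝ, Measurable m ∧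
      (∀ᵐ x ∂μ, alow x ≤ m x ∧ m x ≤ aup x) ∧
      (∀ᵐ x ∂μ, (β : α → ℝ) x = m x * u₀ x) := by

  classical
  -- notation
  set w : ℕ → α → ℝ := fun j => ((T (u j) : α → ℝ)) with hw
  set G : ℕ → α → ℝ := fun j x => f x (w j x) / ‖u j‖ with hGdef
  have hN1 : ∀ᶠ j in atTop, (1:ℝ) ≤ ‖u j‖ := hnorm.eventually_ge_atTop 1
  -- measurability of G
  have huncurry : Measurable (Function.uncurry fun (t : ℝ) (x : α) => f x t) :=
    measurable_uncurry_of_continuous_of_measurable (fun x => hfc x) hfm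
  have hGm : ∀ j, StronglyMeasurable (G j) := by
    intro j
    have h1 : Measurable fun x => f x (w j x) := by
      have := huncurry.comp ((Lp.stronglyMeasurable (T (u j))).measurable.prodMk measurable_id)
      exact this
    exact (h1.div_const _).stronglyMeasurable
  -- L² bound on w j / ‖u j‖
  have hwm : ∀ j, AEStronglyMeasurable (fun x => w j x / ‖u j‖) μ :=
    fun j => ((Lp.stronglyMeasurable (T (u j))).measurable.div_const _).aestronglyMeasurable
  have hwN : ∀ᶠ j in atTop, eLpNorm (fun x => w j x / ‖u j‖) 2 μ ≤ ENNReal.ofReal ‖T‖ := by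
    filter_upwards [hN1] with j hj
    have hpos : (0:ℝ) < ‖u j‖ := by linarith
    have hsm : (fun x => w j x / ‖u j‖) =ᵐ[μ] ⇑((‖u j‖⁻¹ : ℝ) • T (u j)) := by
      filter_upwards [Lp.coeFn_smul (‖u j‖⁻¹ : ℝ) (T (u j))] with x hx
      rw [hx]
      simp [hw, div_eq_inv_mul]
    rw [eLpNorm_congr_ae hsm]
    have heq : eLpNorm (⇑((‖u j‖⁻¹ : ℝ) • T (u j))) 2 μ
        = ENNReal.ofReal ‖(‖u j‖⁻¹ : ℝ) • T (u j)‖ := by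
      rw [Lp.norm_def, ENNReal.ofReal_toReal (Lp.eLpNorm_ne_top _)]
    rw [heq]
    apply ENNReal.ofReal_le_ofReal
    rw [norm_smul, Real.norm_eq_abs, abs_of_nonneg (inv_nonneg.2 hpos.le)]
    have hTle : ‖T (u j)‖ ≤ ‖T‖ * ‖u j‖ := T.le_opNorm _
    calc ‖u j‖⁻¹ * ‖T (u j)‖ ≤ ‖u j‖⁻¹ * (‖T‖ * ‖u j‖) := by
          apply mul_le_mul_of_nonneg_left hTle (inv_nonneg.2 hpos.le)
      _ = ‖T‖ := by field_simp
  -- u₀ ∈ L²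
  have hu₀2 : MemLp u₀ 2 μ := by
    refine ⟨hu₀m.aestronglyMeasurable, ?_⟩
    have hfatou := Lp.eLpNorm_lim_le_liminf_eLpNorm (p := 2) hwm u₀ hae
    have h1 : liminf (fun j => eLpNorm (fun x => w j x / ‖u j‖) 2 μ) atTop
        ≤ ENNReal.ofReal ‖T‖ :=
      le_trans liminf_le_limsup (limsup_le_of_le (h := hwN))
    exact lt_of_le_of_lt (hfatou.trans h1) ENNReal.ofReal_lt_top
  -- bounds on alow, aup
  have habd : ∀ᵐ x ∂μ, -b ≤ alow x ∧ aup x ≤ b ∧ alow x ≤ aup x := by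
    filter_upwards [hgrowth, halow, haup] with x hg hlo hup
    have hevB : ∀ ε : ℝ, 0 < ε → ∀ᶠ t in Bornology.cobounded ℝ, |f x t / t| ≤ b + ε := by
      intro ε hε
      filter_upwards [eventually_cobounded_le_norm (max 1 (|a x| / ε))] with t ht
      rw [Real.norm_eq_abs] at ht
      have ht1 : (1:ℝ) ≤ |t| := le_trans (le_max_left _ _) ht
      have ht0 : (0:ℝ) < |t| := by linarith
      rw [abs_div, div_le_iff₀ ht0]
      have h2 : |a x| ≤ ε * |t| := by
        have h3 := le_trans (le_max_right _ _) ht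
        rw [div_le_iff₀ hε] at h3
        nlinarith
      calc |f x t| ≤ a x + b * |t| := hg t
        _ ≤ |a x| + b * |t| := by linarith [le_abs_self (a x)]
        _ ≤ ε * |t| + b * |t| := by linarith
        _ = (b + ε) * |t| := by ring
    have hbdd_le : IsBoundedUnder (· ≤ ·) (Bornology.cobounded ℝ) (fun t => f x t / t) :=
      ⟨b + 1, eventually_map.2 (by
        filter_upwards [hevB 1 one_pos] with t ht using (abs_le.1 ht).2)⟩
    have hbdd_ge : IsBoundedUnder (· ≥ ·) (Bornology.cobounded ℝ) (fun t => f x t / t) :=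
      ⟨-(b + 1), eventually_map.2 (by
        filter_upwards [hevB 1 one_pos] with t ht using (abs_le.1 ht).1)⟩
    have h3 : alow x ≤ aup x := by
      rw [hlo, hup]; exact liminf_le_limsup hbdd_le hbdd_ge
    have h4 : aup x ≤ b := by
      have h5 : ∀ ε : ℝ, 0 < ε → aup x ≤ b + ε := by
        intro ε hε
        rw [hup]
        refine limsup_le_of_le hbdd_ge.isCoboundedUnder_le ?_
        filter_upwards [hevB ε hε] with t ht using (abs_le.1 ht).2
      by_contra hcon
      push_neg at hcon
      have := h5 ((aup x - b)/2) (by linarith)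
      linarith
    have h6 : -b ≤ alow x := by
      have h5 : ∀ ε : ℝ, 0 < ε → -(b + ε) ≤ alow x := by
        intro ε hε
        rw [hlo]
        refine le_liminf_of_le hbdd_le.isCoboundedUnder_ge ?_
        filter_upwards [hevB ε hε] with t ht using (abs_le.1 ht).1
      by_contra hcon
      push_neg at hcon
      have := h5 ((-b - alow x)/2) (by linarith)
      linarith
    exact ⟨h6, h4, h3⟩
  -- envelopes
  set U : α → ℝ := fun x => if 0 ≤ u₀ x then aup x * u₀ x else alow x * u₀ x with hUdef
  set L : α → ℝ := fun x => if 0 ≤ u₀ x then alow x * u₀ x else aup x * u₀ x with hLdef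
  have hUm : Measurable U :=
    Measurable.ite (measurableSet_le measurable_const hu₀m) (haupm.mul hu₀m) (halowm.mul hu₀m)
  have hLm : Measurable L :=
    Measurable.ite (measurableSet_le measurable_const hu₀m) (halowm.mul hu₀m) (haupm.mul hu₀m)
  have hUval : ∀ x, U x = if 0 ≤ u₀ x then aup x * u₀ x else alow x * u₀ x := fun x => rfl
  have hLval : ∀ x, L x = if 0 ≤ u₀ x then alow x * u₀ x else aup x * u₀ x := fun x => rfl
  have hUbd : ∀ᵐ x ∂μ, ‖U x‖ ≤ ‖b * u₀ x‖ ∧ ‖L x‖ ≤ ‖b * u₀ x‖ := by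
    filter_upwards [habd] with x ⟨h1, h2, h3⟩
    have hla : |alow x| ≤ b := abs_le.2 ⟨h1, h3.trans h2⟩
    have hua : |aup x| ≤ b := abs_le.2 ⟨le_trans h1 h3, h2⟩
    have hbu : ‖b * u₀ x‖ = b * |u₀ x| := by
      rw [Real.norm_eq_abs, abs_mul, abs_of_nonneg hb]
    constructor
    · rw [Real.norm_eq_abs, hbu, hUval x]
      by_cases h0 : 0 ≤ u₀ x
      · rw [if_pos h0, abs_mul]
        exact mul_le_mul_of_nonneg_right hua (abs_nonneg _)
      · rw [if_neg h0, abs_mul]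
        exact mul_le_mul_of_nonneg_right hla (abs_nonneg _)
    · rw [Real.norm_eq_abs, hbu, hLval x]
      by_cases h0 : 0 ≤ u₀ x
      · rw [if_pos h0, abs_mul]
        exact mul_le_mul_of_nonneg_right hla (abs_nonneg _)
      · rw [if_neg h0, abs_mul]
        exact mul_le_mul_of_nonneg_right hua (abs_nonneg _)
  have hU2 : MemLp U 2 μ :=
    MemLp.of_le (hu₀2.const_mul b) hUm.aestronglyMeasurable
      (hUbd.mono fun x hx => hx.1)
  have hL2 : MemLp L 2 μ :=
    MemLp.of_le (hu₀2.const_mul b) hLm.aestronglyMeasurable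
      (hUbd.mono fun x hx => hx.2)
  -- L² bound on G
  set C : ℝ≥0∞ := eLpNorm a 2 μ + ENNReal.ofReal b * ENNReal.ofReal ‖T‖ with hCdef
  have hC : C ≠ ∞ := by
    simp only [hCdef]
    refine (ENNReal.add_lt_top.2 ⟨ha.2.lt_top, ?_⟩).ne
    exact ENNReal.mul_lt_top ENNReal.ofReal_lt_top ENNReal.ofReal_lt_top
  have hGb : ∀ᶠ j in atTop, eLpNorm (G j) 2 μ ≤ C := by
    filter_upwards [hN1, hwN] with j hj hwj
    have hpos : (0:ℝ) < ‖u j‖ := by linarith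
    have hptw : ∀ᵐ x ∂μ, ‖G j x‖ ≤ ‖|a x| + b * |w j x / ‖u j‖|‖ := by
      filter_upwards [hgrowth] with x hx
      have h0 : (0:ℝ) ≤ |a x| + b * |w j x / ‖u j‖| := by positivity
      rw [Real.norm_eq_abs, Real.norm_eq_abs, abs_of_nonneg h0, hGdef]
      simp only
      rw [abs_div, abs_of_nonneg (norm_nonneg (u j)), div_le_iff₀ hpos]
      have h5 : |w j x / ‖u j‖| = |w j x| / ‖u j‖ := by
        rw [abs_div, abs_of_nonneg (norm_nonneg (u j))]
      rw [h5]
      calc |f x (w j x)| ≤ a x + b * |w j x| := hx _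
        _ ≤ |a x| + b * |w j x| := by linarith [le_abs_self (a x)]
        _ ≤ |a x| * ‖u j‖ + b * |w j x| := by nlinarith [abs_nonneg (a x)]
        _ = (|a x| + b * (|w j x| / ‖u j‖)) * ‖u j‖ := by field_simp
    refine (eLpNorm_mono_ae hptw).trans ?_
    have haam : AEStronglyMeasurable (fun x => |a x|) μ := ha.aestronglyMeasurable.norm
    have hwam : AEStronglyMeasurable (fun x => b * |w j x / ‖u j‖|) μ :=
      ((hwm j).norm.const_mul b)
    refine (eLpNorm_add_le haam hwam one_le_two).trans ?_
    rw [hCdef]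
    refine add_le_add ?_ ?_
    · have habs : (fun x => |a x|) = fun x => ‖a x‖ := by funext x; rw [Real.norm_eq_abs]
      rw [habs, eLpNorm_norm]
    · have heq : (fun x => b * |w j x / ‖u j‖|) = b • (fun x => |w j x / ‖u j‖|) := rfl
      rw [heq, eLpNorm_const_smul]
      have h6 : ‖b‖ₑ = ENNReal.ofReal b := by
        rw [← ofReal_norm_eq_enorm, Real.norm_eq_abs, abs_of_nonneg hb]
      rw [h6]
      refine mul_le_mul_right ?_ _
      have habs : (fun x => |w j x / ‖u j‖|) = fun x => ‖w j x / ‖u j‖‖ := by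
        funext x; rw [Real.norm_eq_abs]
      rw [habs, eLpNorm_norm]
      exact hwj
  -- the pointwise pinching
  have hpinch : ∀ᵐ x ∂μ, ∀ ε : ℝ, 0 < ε →
      ∀ᶠ j in atTop, G j x ≤ U x + ε ∧ L x - ε ≤ G j x := by
    filter_upwards [hgrowth, hae, halow, haup] with x hg hq0 hlo hup
    have hq : Tendsto (fun j => w j x / ‖u j‖) atTop (nhds (u₀ x)) := hq0
    intro ε hε
    by_cases h0 : u₀ x = 0
    · -- zero case
      have hU0 : U x = 0 := by rw [hUval x, h0]; simp
      have hL0 : L x = 0 := by rw [hLval x, h0]; simp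
      rw [h0] at hq
      have htend : Tendsto (fun j => |a x| / ‖u j‖ + b * |w j x / ‖u j‖|) atTop (nhds 0) := by
        have h1 : Tendsto (fun j => |a x| / ‖u j‖) atTop (nhds 0) :=
          tendsto_const_nhds.div_atTop hnorm
        have h2 : Tendsto (fun j => |w j x / ‖u j‖|) atTop (nhds 0) := by
          have := hq.abs
          simpa using this
        have := h1.add (h2.const_mul b)
        simpa using this
      have hev := htend.eventually_lt_const hε
      filter_upwards [hev, hN1] with j hj hj1
      have hpos : (0:ℝ) < ‖u j‖ := by linarith
      have h7 : |G j x| = |f x (w j x)| / ‖u j‖ := by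
        rw [hGdef]
        simp only
        rw [abs_div, abs_of_nonneg (norm_nonneg (u j))]
      have hGb2 : |G j x| ≤ |a x| / ‖u j‖ + b * |w j x / ‖u j‖| := by
        rw [h7]
        calc |f x (w j x)| / ‖u j‖ ≤ (|a x| + b * |w j x|) / ‖u j‖ := by
              gcongr
              calc |f x (w j x)| ≤ a x + b * |w j x| := hg _
                _ ≤ |a x| + b * |w j x| := by linarith [le_abs_self (a x)]
          _ = |a x| / ‖u j‖ + b * (|w j x| / ‖u j‖) := by ring
          _ = |a x| / ‖u j‖ + b * |w j x / ‖u j‖| := by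
              rw [abs_div, abs_of_nonneg (norm_nonneg (u j))]
      have habs2 : |G j x| < ε := lt_of_le_of_lt hGb2 hj
      obtain ⟨hg1, hg2⟩ := abs_le.1 habs2.le
      rw [hU0, hL0]
      constructor <;> linarith
    · -- nonzero case
      have hcabs : 0 < |u₀ x| := abs_pos.2 h0
      have hqabs : Tendsto (fun j => |w j x / ‖u j‖|) atTop (nhds |u₀ x|) := hq.abs
      have hqlb : ∀ᶠ j in atTop, |u₀ x| / 2 ≤ |w j x / ‖u j‖| :=
        hqabs.eventually (eventually_ge_nhds (by linarith))
      have hvtop : Tendsto (fun j => |w j x|) atTop atTop := by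
        refine tendsto_atTop_mono' atTop ?_
          (hnorm.const_mul_atTop (by linarith : (0:ℝ) < |u₀ x| / 2))
        filter_upwards [hqlb, hN1] with j hj hj1
        have hpos : (0:ℝ) < ‖u j‖ := by linarith
        have h5 : |w j x / ‖u j‖| = |w j x| / ‖u j‖ := by
          rw [abs_div, abs_of_nonneg (norm_nonneg (u j))]
        rw [h5] at hj
        exact (le_div_iff₀ hpos).1 hj
      have hvcob : Tendsto (fun j => w j x) atTop (Bornology.cobounded ℝ) := by
        rw [← tendsto_norm_atTop_iff_cobounded]
        simpa [Real.norm_eq_abs] using hvtop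
      have hbig : ∀ᶠ t in Bornology.cobounded ℝ, (1:ℝ) ≤ |t| := by
        simpa [Real.norm_eq_abs] using eventually_cobounded_le_norm (E := ℝ) 1
      have hevbd : ∀ᶠ t in Bornology.cobounded ℝ, |f x t / t| ≤ |a x| + b := by
        filter_upwards [hbig] with t ht
        have ht0 : (0:ℝ) < |t| := by linarith
        rw [abs_div, div_le_iff₀ ht0]
        calc |f x t| ≤ a x + b * |t| := hg t
          _ ≤ |a x| + b * |t| := by linarith [le_abs_self (a x)]
          _ ≤ (|a x| + b) * |t| := by nlinarith [abs_nonneg (a x)]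
      have hbdd_le : IsBoundedUnder (· ≤ ·) (Bornology.cobounded ℝ) (fun t => f x t / t) :=
        ⟨|a x| + b, eventually_map.2 (by
          filter_upwards [hevbd] with t ht using (abs_le.1 ht).2)⟩
      have hbdd_ge : IsBoundedUnder (· ≥ ·) (Bornology.cobounded ℝ) (fun t => f x t / t) :=
        ⟨-(|a x| + b), eventually_map.2 (by
          filter_upwards [hevbd] with t ht using (abs_le.1 ht).1)⟩
      set M : ℝ := |a x| + b + 1 with hM
      have hM0 : 0 ≤ M := by positivity
      have hMpos : 0 < M := by positivity
      set ε₁ : ℝ := ε / (2 * (|u₀ x| + 1)) with hε₁def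
      have hd1 : (0:ℝ) < 2 * (|u₀ x| + 1) := by positivity
      have hε₁pos : 0 < ε₁ := by rw [hε₁def]; positivity
      set ε₂ : ℝ := ε / (2 * M) with hε₂def
      have hε₂pos : 0 < ε₂ := by rw [hε₂def]; positivity
      have h₁ : ε₁ * (|u₀ x| + 1) ≤ ε / 2 := by
        rw [hε₁def]
        rw [div_mul_eq_mul_div, div_le_div_iff₀ hd1 two_pos]
        ring_nf
        nlinarith [abs_nonneg (u₀ x), hε.le]
      have h₂ : M * ε₂ ≤ ε / 2 := by
        rw [hε₂def]
        rw [mul_div_assoc', div_le_div_iff₀ (by positivity) two_pos]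
        ring_nf
        nlinarith [hε.le]
      have hevlo : ∀ᶠ t in Bornology.cobounded ℝ, alow x - ε₁ < f x t / t := by
        refine eventually_lt_of_lt_liminf ?_ hbdd_ge
        rw [← hlo]; linarith
      have hevhi : ∀ᶠ t in Bornology.cobounded ℝ, f x t / t < aup x + ε₁ := by
        refine eventually_lt_of_limsup_lt ?_ hbdd_le
        rw [← hup]; linarith
      have hjlo := hvcob.eventually hevlo
      have hjhi := hvcob.eventually hevhi
      have hjbd := hvcob.eventually hevbd
      have hjbig := hvcob.eventually hbig
      have hjq : ∀ᶠ j in atTop, |w j x / ‖u j‖ - u₀ x| ≤ ε₂ :=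
        hq.eventually (by
          filter_upwards [eventually_abs_sub_lt (u₀ x) hε₂pos] with y hy using hy.le)
      filter_upwards [hjlo, hjhi, hjbd, hjbig, hjq, hN1] with j hjl hjh hjb hjB hjq2 hj1
      have hNpos : (0:ℝ) < ‖u j‖ := by linarith
      have hvne : w j x ≠ 0 := by
        intro hzero
        rw [hzero] at hjB
        norm_num at hjB
      have hGeq : G j x = (f x (w j x) / w j x) * (w j x / ‖u j‖) := by
        rw [hGdef]
        simp only
        field_simp
      have hpM : |f x (w j x) / w j x| ≤ M := by
        refine hjb.trans ?_
        rw [hM]; linarith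
      have harith := pinch_arith (p := f x (w j x) / w j x) (q := w j x / ‖u j‖)
        (c := u₀ x) (la := alow x) (ua := aup x) (M := M) (ε := ε) (ε₁ := ε₁) (ε₂ := ε₂)
        hM0 hε₁pos h₁ h₂ hjl hjh hpM hjq2
      rw [hGeq, hUval x, hLval x]
      exact ⟨harith.1, harith.2⟩
  -- weak limit comparison, upper bound
  have hBm : Measurable (⇑β : α → ℝ) := (Lp.stronglyMeasurable β).measurable
  have hB2 : MemLp (⇑β : α → ℝ) 2 μ := Lp.memLp β
  have hconv : ∀ s : Set α, MeasurableSet s → μ s ≠ ∞ →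
      Tendsto (fun j => ∫ x in s, G j x ∂μ) atTop (nhds (∫ x in s, (β : α → ℝ) x ∂μ)) := by
    intro s hsm hsfin
    have hg := hweak (indicatorConstLp 2 hsm hsfin (1:ℝ))
    have hind : ∀ (F : α → ℝ), AEStronglyMeasurable F μ →
        ∫ x, F x * (indicatorConstLp 2 hsm hsfin (1:ℝ) : α → ℝ) x ∂μ = ∫ x in s, F x ∂μ := by
      intro F hF
      rw [← integral_indicator hsm]
      refine integral_congr_ae ?_
      filter_upwards [indicatorConstLp_coeFn (p := 2) (hs := hsm) (hμs := hsfin) (c := (1:ℝ))]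
        with x hx
      rw [hx]
      by_cases hxs : x ∈ s
      · simp [Set.indicator_of_mem hxs]
      · simp [Set.indicator_of_notMem hxs]
    have h1 : ∀ j, ∫ x, G j x * (indicatorConstLp 2 hsm hsfin (1:ℝ) : α → ℝ) x ∂μ
        = ∫ x in s, G j x ∂μ := fun j => hind (G j) (hGm j).aestronglyMeasurable
    have h2 : ∫ x, (β : α → ℝ) x * (indicatorConstLp 2 hsm hsfin (1:ℝ) : α → ℝ) x ∂μ
        = ∫ x in s, (β : α → ℝ) x ∂μ := hind _ hB2.aestronglyMeasurable
    rw [h2] at hg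
    refine hg.congr fun j => h1 j
  have hupper : ∀ᵐ x ∂μ, (β : α → ℝ) x ≤ U x :=
    weak_le hGm hC hGb hUm hU2 hBm hB2
      (hpinch.mono fun x hx ε hε => (hx ε hε).mono fun j hj => hj.1) hconv
  have hlower : ∀ᵐ x ∂μ, L x ≤ (β : α → ℝ) x := by
    have hGm' : ∀ j, StronglyMeasurable (fun x => -G j x) := fun j => (hGm j).neg
    have hGb' : ∀ᶠ j in atTop, eLpNorm (fun x => -G j x) 2 μ ≤ C := by
      filter_upwards [hGb] with j hj
      have : (fun x => -G j x) = -(G j) := rfl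
      rw [this, eLpNorm_neg]
      exact hj
    have hconv' : ∀ s : Set α, MeasurableSet s → μ s ≠ ∞ →
        Tendsto (fun j => ∫ x in s, -G j x ∂μ) atTop
          (nhds (∫ x in s, -(β : α → ℝ) x ∂μ)) := by
      intro s hsm hsfin
      have := (hconv s hsm hsfin).neg
      simpa [integral_neg] using this
    have hpinch' : ∀ᵐ x ∂μ, ∀ ε : ℝ, 0 < ε → ∀ᶠ j in atTop, -G j x ≤ -L x + ε := by
      filter_upwards [hpinch] with x hx ε hε
      filter_upwards [hx ε hε] with j hj
      linarith [hj.2]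
    have := weak_le hGm' hC hGb' hLm.neg (hL2.neg) hBm.neg hB2.neg hpinch' hconv'
    filter_upwards [this] with x hx
    simpa using hx
  -- construct m and conclude
  refine ⟨fun x => if u₀ x = 0 then (alow x + aup x) / 2 else (β : α → ℝ) x / u₀ x, ?_, ?_, ?_⟩
  · refine Measurable.ite (hu₀m (measurableSet_singleton 0)) ?_ ?_
    · exact (halowm.add haupm).div_const 2
    · exact hBm.div hu₀m
  · filter_upwards [habd, hupper, hlower] with x ⟨h1, h2, h3⟩ hup hlow
    by_cases h0 : u₀ x = 0
    · simp only [if_pos h0]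
      constructor <;> linarith
    · simp only [if_neg h0]
      rcases lt_or_gt_of_ne h0 with hneg | hpos
      · have hU0 : U x = alow x * u₀ x := by
          rw [hUval x, if_neg (not_le.2 hneg)]
        have hL0 : L x = aup x * u₀ x := by
          rw [hLval x, if_neg (not_le.2 hneg)]
        rw [hU0] at hup
        rw [hL0] at hlow
        constructor
        · rw [le_div_iff_of_neg hneg]
          linarith
        · rw [div_le_iff_of_neg hneg]
          linarith
      · have hU0 : U x = aup x * u₀ x := by
          rw [hUval x, if_pos hpos.le]
        have hL0 : L x = alow x * u₀ x := by
          rw [hLval x, if_pos hpos.le]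
        rw [hU0] at hup
        rw [hL0] at hlow
        constructor
        · rw [le_div_iff₀ hpos]
          linarith
        · rw [div_le_iff₀ hpos]
          linarith
  · filter_upwards [hupper, hlower] with x hup hlow
    by_cases h0 : u₀ x = 0
    · simp only [if_pos h0, h0, mul_zero]
      have hU0 : U x = 0 := by
        rw [hUval x, h0]; simp
      have hL0 : L x = 0 := by
        rw [hLval x, h0]; simp
      rw [hU0] at hup; rw [hL0] at hlow
      linarith
    · simp only [if_neg h0]
      field_simp
end

section
/- Let H be a real Hilbert space with closed subspaces H = V ⊕ W (orthogonal), and suppose a bounded symmetric bilinear form satisfies ⟨u,u⟩ ≤ λ‖u‖²_{L²} for u ∈ V and ⟨u,u⟩ ≥ Λ‖u‖²_{L²} for u ∈ W, where λ < Λ and ‖·‖_{L²} comes from a second inner product in which H embeds. If m is measurable with λ < m(x) < Λ a.e. and u ∈ H satisfies ⟨u,φ⟩ = ∫ m u φ for all φ ∈ H, then writing u = u₁ + u₂ (u₁ ∈ V, u₂ ∈ W) one obtains ‖u₁‖² ≥ λ‖u₁‖²_{L²} + ∫ m u₁u₂ and ‖u₂‖² ≤ Λ‖u₂‖²_{L²}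 + ∫ m u₁u₂, and if u ≠ 0 at least one inequality is strict, yielding the contradiction ‖u₁‖² − ‖u₂‖² > ‖u₁‖² − ‖u₂‖²; hence u = 0. -/
open MeasureTheory Filter ENNReal
open scoped RealInnerProductSpace

/-- Abstract non-resonance lemma in a real Hilbert space `H = V ⊕ W`
(orthogonal sum), where the quadratic form (the inner product of `H`)
satisfies `⟪v,v⟫ ≤ λ‖v‖²_{L²}` on `V` and `⟪w,w⟫ ≥ Λ‖w‖²_{L²}` on `W` with
`λ < Λ`, the `L²` norm coming from the embedding `T : H → L²(μ)`.  If
`λ < m(x) < Λ` a.e. and `⟪u,φ⟫ = ∫ m (Tu)(Tφ)` for all `φ`, then, writing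
`u = u₁ + u₂` with `u₁ ∈ V`, `u₂ ∈ W`, one obtains the two inequalities
`‖u₁‖² ≥ λ‖u₁‖²_{L²} + ∫ m (Tu₁)(Tu₂)` and
`‖u₂‖² ≤ Λ‖u₂‖²_{L²} + ∫ m (Tu₁)(Tu₂)`, and `u = 0`. -/
theorem stmt17 {α : Type*} [MeasurableSpace α] (μ : Measure α)
    {H : Type*} [NormedAddCommGroup H] [InnerProductSpace ℝ H] [CompleteSpace H]
    (T : H →L[ℝ] Lp ℝ 2 μ) (hTinj : Function.Injective T)
    (V W : Submodule ℝ H)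
    (horth : ∀ v ∈ V, ∀ w ∈ W, ⟪v, w⟫ = 0)
    (hdecomp : ∀ u : H, ∃ v ∈ V, ∃ w ∈ W, u = v + w)
    (lam Lam : ℝ) (hlt : lam < Lam)
    (hV : ∀ v ∈ V, ⟪v, v⟫ ≤ lam * ‖T v‖^2)
    (hW : ∀ w ∈ W, Lam * ‖T w‖^2 ≤ ⟪w, w⟫)
    (m : α → ℝ) (hm : Measurable m)
    (hmb : ∀ᵐ x ∂μ, lam < m x ∧ m x < Lam)
    (u u₁ u₂ : H) (hu₁ : u₁ ∈ V) (hu₂ : u₂ ∈ W) (hsum : u = u₁ + u₂)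
    (heq : ∀ φ : H, ⟪u, φ⟫ =
      ∫ x, m x * (T u : α → ℝ) x * (T φ : α → ℝ) x ∂μ) :
    (lam * ‖T u₁‖^2 +
        ∫ x, m x * (T u₁ : α → ℝ) x * (T u₂ : α → ℝ) x ∂μ ≤ ‖u₁‖^2) ∧
    (‖u₂‖^2 ≤ Lam * ‖T u₂‖^2 +
        ∫ x, m x * (T u₁ : α → ℝ) x * (T u₂ : α → ℝ) x ∂μ) ∧
    u = 0 := by
  have h12 : ⟪u₁, u₂⟫ = 0 := horth u₁ hu₁ u₂ hu₂
  set f : α → ℝ := (T u₁ : α → ℝ) with hfdef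
  set g : α → ℝ := (T u₂ : α → ℝ) with hgdef
  -- integrability of the pointwise products
  have hprod : ∀ (a b : Lp ℝ 2 μ),
      Integrable (fun x => (a : α → ℝ) x * (b : α → ℝ) x) μ := by
    intro a b
    have := L2.integrable_inner (𝕜 := ℝ) b a
    simpa [RCLike.inner_apply, starRingEnd_apply] using this
  have hff : Integrable (fun x => f x * f x) μ := hprod _ _
  have hgg : Integrable (fun x => g x * g x) μ := hprod _ _
  have hfg : Integrable (fun x => f x * g x) μ := hprod _ _
  set C : ℝ := max |lam| |Lam| with hC
  have hbnd : ∀ᵐ x ∂μ, ‖m x‖ ≤ C := by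
    filter_upwards [hmb] with x hx
    rw [Real.norm_eq_abs, abs_le]
    have h1 := le_max_left |lam| |Lam|
    have h2 := le_max_right |lam| |Lam|
    have h3 := le_abs_self Lam
    have h4 := neg_abs_le lam
    exact ⟨by linarith [hx.1], by linarith [hx.2]⟩
  have hmul : ∀ {h : α → ℝ}, Integrable h μ →
      Integrable (fun x => m x * h x) μ := fun hint =>
    hint.bdd_mul hm.aestronglyMeasurable hbnd
  have hmff : Integrable (fun x => m x * (f x * f x)) μ := hmul hff
  have hmgg : Integrable (fun x => m x * (g x * g x)) μ := hmul hgg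
  have hmfg : Integrable (fun x => m x * (f x * g x)) μ := hmul hfg
  -- the cross term
  set I : ℝ := ∫ x, m x * f x * g x ∂μ with hIdef
  have hI : I = ∫ x, m x * (f x * g x) ∂μ := by simp_rw [hIdef, mul_assoc]
  -- Tu = f + g a.e.
  have hTu : (T u : α → ℝ) =ᵐ[μ] fun x => f x + g x := by
    rw [hsum, map_add]
    exact Lp.coeFn_add _ _
  -- norms in L²
  have hnorm : ∀ a : Lp ℝ 2 μ, ‖a‖ ^ 2 = ∫ x, (a : α → ℝ) x * (a : α → ℝ) x ∂μ := by
    intro a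
    rw [← real_inner_self_eq_norm_sq, L2.inner_def]
    simp [RCLike.inner_apply, starRingEnd_apply]
    simp only [sq]
  -- the two basic identities
  have E1 : ‖u₁‖ ^ 2 = (∫ x, m x * (f x * f x) ∂μ) + I := by
    have h := heq u₁
    have hL : ⟪u, u₁⟫ = ‖u₁‖ ^ 2 := by
      rw [hsum, inner_add_left, real_inner_self_eq_norm_sq,
        real_inner_comm, h12, add_zero]
    have hR : (∫ x, m x * (T u : α → ℝ) x * f x ∂μ)
        = (∫ x, m x * (f x * f x) ∂μ) + I := by
      rw [hI, ← integral_add hmff hmfg]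
      refine integral_congr_ae ?_
      filter_upwards [hTu] with x hx
      rw [hx]; ring
    rw [hL, hR] at h; exact h
  have E2 : ‖u₂‖ ^ 2 = (∫ x, m x * (g x * g x) ∂μ) + I := by
    have h := heq u₂
    have hL : ⟪u, u₂⟫ = ‖u₂‖ ^ 2 := by
      rw [hsum, inner_add_left, real_inner_self_eq_norm_sq, h12, zero_add]
    have hR : (∫ x, m x * (T u : α → ℝ) x * g x ∂μ)
        = (∫ x, m x * (g x * g x) ∂μ) + I := by
      rw [hI, ← integral_add hmgg hmfg]
      refine integral_congr_ae ?_
      filter_upwards [hTu] with x hx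
      rw [hx]; ring
    rw [hL, hR] at h; exact h
  -- comparison with lam, Lam
  have cf : lam * ‖T u₁‖ ^ 2 ≤ ∫ x, m x * (f x * f x) ∂μ := by
    rw [hnorm, ← integral_const_mul]
    refine integral_mono_ae (hff.const_mul lam) hmff ?_
    filter_upwards [hmb] with x hx
    exact mul_le_mul_of_nonneg_right hx.1.le (mul_self_nonneg _)
  have cg : (∫ x, m x * (g x * g x) ∂μ) ≤ Lam * ‖T u₂‖ ^ 2 := by
    rw [hnorm, ← integral_const_mul]
    refine integral_mono_ae hmgg (hgg.const_mul Lam) ?_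
    filter_upwards [hmb] with x hx
    exact mul_le_mul_of_nonneg_right hx.2.le (mul_self_nonneg _)
  refine ⟨by rw [E1]; linarith, by rw [E2]; linarith, ?_⟩
  -- now show u = 0
  have hVu : ‖u₁‖ ^ 2 ≤ lam * ‖T u₁‖ ^ 2 := by
    have := hV u₁ hu₁; rwa [real_inner_self_eq_norm_sq] at this
  have hWu : Lam * ‖T u₂‖ ^ 2 ≤ ‖u₂‖ ^ 2 := by
    have := hW u₂ hu₂; rwa [real_inner_self_eq_norm_sq] at this
  have hIzero : I = 0 := le_antisymm (by linarith) (by linarith)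
  -- u₁ = 0
  have hz1 : u₁ = 0 := by
    have hJint : Integrable (fun x => (m x - lam) * (f x * f x)) μ := by
      have := hmff.sub (hff.const_mul lam)
      simpa [sub_mul, Pi.sub_def] using this
    have hJnn : 0 ≤ᵐ[μ] fun x => (m x - lam) * (f x * f x) := by
      filter_upwards [hmb] with x hx
      exact mul_nonneg (by linarith [hx.1]) (mul_self_nonneg _)
    have hJle : (∫ x, (m x - lam) * (f x * f x) ∂μ) = 0 := by
      have hsplit : (∫ x, (m x - lam) * (f x * f x) ∂μ)
          = (∫ x, m x * (f x * f x) ∂μ) - lam * ‖T u₁‖ ^ 2 := by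
        rw [hnorm, ← integral_const_mul, ← integral_sub hmff (hff.const_mul lam)]
        refine integral_congr_ae (Eventually.of_forall fun x => by ring)
      have hup : (∫ x, m x * (f x * f x) ∂μ) ≤ lam * ‖T u₁‖ ^ 2 := by
        linarith [E1, hVu, hIzero]
      have hlow := integral_nonneg_of_ae hJnn
      linarith [hsplit]
    have hae := (integral_eq_zero_iff_of_nonneg_ae hJnn hJint).1 hJle
    have hfz : f =ᵐ[μ] 0 := by
      filter_upwards [hmb, hae] with x hx hx0
      have hpos : 0 < m x - lam := by linarith [hx.1]
      rcases mul_eq_zero.1 hx0 with h | h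
      · exact absurd h hpos.ne'
      · simpa [mul_self_eq_zero] using h
    have : ‖T u₁‖ ^ 2 = 0 := by
      rw [hnorm]
      rw [integral_eq_zero_iff_of_nonneg_ae
        (by filter_upwards [hfz] with x hx; exact mul_self_nonneg _) hff]
      filter_upwards [hfz] with x hx
      simp [hx]
    have hT0 : T u₁ = 0 := by
      have := pow_eq_zero_iff (n := 2) (by norm_num) |>.1 this
      exact norm_eq_zero.1 this
    exact hTinj (by simpa using hT0)
  -- u₂ = 0
  have hz2 : u₂ = 0 := by
    have hJint : Integrable (fun x => (Lam - m x) * (g x * g x)) μ := by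
      have := (hgg.const_mul Lam).sub hmgg
      simpa [sub_mul, Pi.sub_def] using this
    have hJnn : 0 ≤ᵐ[μ] fun x => (Lam - m x) * (g x * g x) := by
      filter_upwards [hmb] with x hx
      exact mul_nonneg (by linarith [hx.2]) (mul_self_nonneg _)
    have hJle : (∫ x, (Lam - m x) * (g x * g x) ∂μ) = 0 := by
      have hsplit : (∫ x, (Lam - m x) * (g x * g x) ∂μ)
          = Lam * ‖T u₂‖ ^ 2 - (∫ x, m x * (g x * g x) ∂μ) := by
        rw [hnorm, ← integral_const_mul, ← integral_sub (hgg.const_mul Lam) hmgg]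
        refine integral_congr_ae (Eventually.of_forall fun x => by ring)
      have hup : Lam * ‖T u₂‖ ^ 2 ≤ (∫ x, m x * (g x * g x) ∂μ) := by
        linarith [E2, hWu, hIzero]
      have hlow := integral_nonneg_of_ae hJnn
      linarith [hsplit]
    have hae := (integral_eq_zero_iff_of_nonneg_ae hJnn hJint).1 hJle
    have hgz : g =ᵐ[μ] 0 := by
      filter_upwards [hmb, hae] with x hx hx0
      have hpos : 0 < Lam - m x := by linarith [hx.2]
      rcases mul_eq_zero.1 hx0 with h | h
      · exact absurd h hpos.ne'
      · simpa [mul_self_eq_zero] using h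
    have : ‖T u₂‖ ^ 2 = 0 := by
      rw [hnorm]
      rw [integral_eq_zero_iff_of_nonneg_ae
        (by filter_upwards [hgz] with x hx; exact mul_self_nonneg _) hgg]
      filter_upwards [hgz] with x hx
      simp [hx]
    have hT0 : T u₂ = 0 := by
      have := pow_eq_zero_iff (n := 2) (by norm_num) |>.1 this
      exact norm_eq_zero.1 this
    exact hTinj (by simpa using hT0)
  rw [hsum, hz1, hz2, add_zero]
end
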